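/- arXiv:2508.11585 — 4 statements merged into one kernel-verified Lean document; each statement's English description precedes it below -/
import Mathlib

section
/- Let B be a graph admitting a path-decomposition of width p, and suppose B has a proper 2-coloring with color classes C_1 and C_2 where |C_1| ≥ |C_2|. Then for every non-negative integer a with |C_2| − p ≤ a ≤ |C_1|, there exists a set X of at most p vertices of B and a proper 2-coloring of B \ X with color classes C'_1, C'_2 such that |C'_1| = a. -/
variable {V : Type} [DecidableEq V]

def StepRel (A C : Finset V) : Prop :=
  (∃ x, x ∉ A ∧ C = insert x A) ∨ (∃ x, x ∈ A ∧ C = A.erase x)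

lemma nat_ivt (f : ℕ → ℕ) (M a : ℕ) (h0 : f 0 ≤ a) (hM : a ≤ f M)
    (hstep : ∀ i < M, f (i+1) ≤ f i + 1) : ∃ i ≤ M, f i = a := by
  induction M with
  | zero => exact ⟨0, le_refl _, le_antisymm h0 hM⟩
  | succ M ih =>
    by_cases h : a ≤ f M
    · obtain ⟨i, hi, hfi⟩ := ih h (fun i hi => hstep i (by omega))
      exact ⟨i, by omega, hfi⟩
    · have := hstep M (by omega)
      exact ⟨M+1, le_refl _, by omega⟩

noncomputable def segN (S T : Finset V) (i : ℕ) : Finset V :=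
  (S \ ((S \ T).toList.take i).toFinset) ∪ ((T \ S).toList.take (i - (S \ T).card)).toFinset

def segLen (S T : Finset V) : ℕ := (S \ T).card + (T \ S).card

lemma segLen_eq_zero {S T : Finset V} (h : segLen S T = 0) : S = T := by
  unfold segLen at h
  have h1 : S \ T = ∅ := Finset.card_eq_zero.mp (by omega)
  have h2 : T \ S = ∅ := Finset.card_eq_zero.mp (by omega)
  apply Finset.Subset.antisymm
  · intro x hx
    by_contra hxT
    have : x ∈ S \ T := Finset.mem_sdiff.mpr ⟨hx, hxT⟩
    simp [h1] at this
  · intro x hx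
    by_contra hxS
    have : x ∈ T \ S := Finset.mem_sdiff.mpr ⟨hx, hxS⟩
    simp [h2] at this

lemma segN_zero (S T : Finset V) : segN S T 0 = S := by
  simp [segN]

lemma segN_of_ge {S T : Finset V} {i : ℕ} (h : segLen S T ≤ i) : segN S T i = T := by
  unfold segN
  unfold segLen at h
  rw [List.take_of_length_le (by rw [Finset.length_toList]; omega),
      List.take_of_length_le (by rw [Finset.length_toList]; omega)]
  rw [Finset.toList_toFinset, Finset.toList_toFinset, Finset.sdiff_sdiff_self_left]
  ext z
  simp only [Finset.mem_union, Finset.mem_inter, Finset.mem_sdiff]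
  tauto

-- take-set monotone
lemma takeFinset_mono {l : List V} {i j : ℕ} (h : i ≤ j) :
    (l.take i).toFinset ⊆ (l.take j).toFinset := by
  intro x hx
  rw [List.mem_toFinset] at *
  have : l.take i = (l.take j).take i := by
    rw [List.take_take, min_eq_left h]
  rw [this] at hx
  exact List.take_subset _ _ hx

lemma takeFinset_subset (l : List V) (i : ℕ) : (l.take i).toFinset ⊆ l.toFinset := by
  intro x hx
  rw [List.mem_toFinset] at *
  exact List.take_subset _ _ hx

lemma segN_subset (S T : Finset V) (i : ℕ) : segN S T i ⊆ S ∨ segN S T i ⊆ T := by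
  by_cases h : i ≤ (S \ T).card
  · left
    unfold segN
    have : i - (S \ T).card = 0 := by omega
    rw [this]
    simp only [List.take_zero, List.toFinset_nil]
    intro x hx
    simp only [Finset.union_empty, Finset.mem_sdiff] at hx
    exact hx.1
  · right
    unfold segN
    intro x hx
    rcases Finset.mem_union.mp hx with hx | hx
    · rw [List.take_of_length_le (by rw [Finset.length_toList]; omega),
          Finset.toList_toFinset, Finset.sdiff_sdiff_self_left] at hx
      exact (Finset.mem_inter.mp hx).2
    · have := takeFinset_subset (T \ S).toList (i - (S \ T).card) hx
      rw [Finset.toList_toFinset] at this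
      exact (Finset.mem_sdiff.mp this).1

lemma notmem_take_of_nodup {l : List V} (hn : l.Nodup) {i : ℕ} (hi : i < l.length) :
    l[i] ∉ (l.take i).toFinset := by
  intro hmem
  rw [List.mem_toFinset] at hmem
  have h1 : l.take (i+1) = l.take i ++ [l[i]] := by
    rw [List.take_succ]; simp [List.getElem?_eq_getElem hi]
  have h2 : (l.take (i+1)).Nodup := (List.take_sublist _ _).nodup hn
  rw [h1, List.nodup_append] at h2
  exact h2.2.2 _ hmem _ (by simp) rfl

lemma segN_step {S T : Finset V} {i : ℕ} (h : i < segLen S T) :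
    StepRel (segN S T i) (segN S T (i+1)) := by
  set l1 := (S \ T).toList with hl1
  set l2 := (T \ S).toList with hl2
  have hlen1 : l1.length = (S \ T).card := Finset.length_toList _
  have hlen2 : l2.length = (T \ S).card := Finset.length_toList _
  unfold segLen at h
  by_cases hc : i < (S \ T).card
  · -- erase step
    have hi : i < l1.length := by omega
    set x := l1[i] with hx
    have hxST : x ∈ S \ T := by
      rw [← Finset.mem_toList, ← hl1]; exact List.getElem_mem _
    have htake : l1.take (i+1) = l1.take i ++ [x] := by
      rw [List.take_succ, List.getElem?_eq_getElem hi]; rfl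
    have hzero : i - (S \ T).card = 0 := by omega
    have hzero' : i + 1 - (S \ T).card = 0 := by omega
    right
    refine ⟨x, ?_, ?_⟩
    · unfold segN
      rw [hzero]
      simp only [List.take_zero, List.toFinset_nil, Finset.union_empty]
      rw [Finset.mem_sdiff]
      refine ⟨(Finset.mem_sdiff.mp hxST).1, notmem_take_of_nodup (Finset.nodup_toList _) hi⟩
    · unfold segN
      rw [hzero, hzero']
      simp only [List.take_zero, List.toFinset_nil, Finset.union_empty]
      rw [htake, List.toFinset_append]
      simp only [List.toFinset_cons, List.toFinset_nil, LawfulSingleton.insert_empty_eq]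
      rw [Finset.union_comm, ← Finset.insert_eq, Finset.sdiff_insert]
  · -- insert step
    have hfull1 : l1.take i = l1 := List.take_of_length_le (by omega)
    have hfull1' : l1.take (i+1) = l1 := List.take_of_length_le (by omega)
    set j := i - (S \ T).card with hj
    have hjl : j < l2.length := by omega
    set y := l2[j] with hy
    have hyTS : y ∈ T \ S := by
      rw [← Finset.mem_toList, ← hl2]; exact List.getElem_mem _
    have htake : l2.take (j+1) = l2.take j ++ [y] := by
      rw [List.take_succ, List.getElem?_eq_getElem hjl]; rfl
    have hsucc : i + 1 - (S \ T).card = j + 1 := by omega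
    left
    refine ⟨y, ?_, ?_⟩
    · unfold segN
      intro hmem
      rcases Finset.mem_union.mp hmem with hm | hm
      · exact (Finset.mem_sdiff.mp hyTS).2 (Finset.mem_sdiff.mp hm).1
      · exact notmem_take_of_nodup (Finset.nodup_toList _) hjl hm
    · unfold segN
      rw [hsucc, htake, hfull1, hfull1', List.toFinset_append, ← hj]
      ext z
      simp only [Finset.mem_union, Finset.mem_insert, List.toFinset_cons, List.toFinset_nil,
        Finset.mem_insert, List.mem_toFinset, Finset.mem_sdiff]
      tauto

lemma segN_ctg {S T : Finset V} {v : V} {i j k : ℕ} (hij : i ≤ j) (hjk : j ≤ k)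
    (hi : v ∈ segN S T i) (hk : v ∈ segN S T k) : v ∈ segN S T j := by
  by_cases vS : v ∈ S
  · by_cases vT : v ∈ T
    · -- v in all
      unfold segN
      apply Finset.mem_union_left
      rw [Finset.mem_sdiff]
      refine ⟨vS, fun hmem => ?_⟩
      have := takeFinset_subset _ _ hmem
      rw [Finset.toList_toFinset] at this
      exact (Finset.mem_sdiff.mp this).2 vT
    · -- antitone: use hk
      unfold segN at hk ⊢
      rcases Finset.mem_union.mp hk with hm | hm
      · apply Finset.mem_union_left
        rw [Finset.mem_sdiff] at hm ⊢
        exact ⟨vS, fun hmem => hm.2 (takeFinset_mono hjk hmem)⟩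
      · exfalso
        have := takeFinset_subset _ _ hm
        rw [Finset.toList_toFinset] at this
        exact (Finset.mem_sdiff.mp this).2 vS
  · by_cases vT : v ∈ T
    · -- monotone: use hi
      unfold segN at hi ⊢
      rcases Finset.mem_union.mp hi with hm | hm
      · exact absurd (Finset.mem_sdiff.mp hm).1 vS
      · exact Finset.mem_union_right _ (takeFinset_mono (by omega) hm)
    · exfalso
      rcases segN_subset S T i with hs | hs
      · exact vS (hs hi)
      · exact vT (hs hi)

lemma exists_nice (l : List (Finset V)) (S : Finset V) :
    ∃ (m : ℕ) (N : ℕ → Finset V),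
      N 0 = S ∧
      (∀ i, m ≤ i → N i = (S :: l).getLast (List.cons_ne_nil S l)) ∧
      (∀ i < m, StepRel (N i) (N (i+1))) ∧
      (∀ i, ∃ W ∈ S :: l, N i ⊆ W) ∧
      (∀ T ∈ S :: l, ∃ i ≤ m, N i = T) ∧
      (∀ v : V,
        (∀ i j k : ℕ, i ≤ j → j ≤ k → v ∈ (S :: l).getD i ∅ → v ∈ (S :: l).getD k ∅ →
          v ∈ (S :: l).getD j ∅) →
        ∀ i j k : ℕ, i ≤ j → j ≤ k → v ∈ N i → v ∈ N k → v ∈ N j) := by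
  induction l generalizing S with
  | nil =>
    refine ⟨0, fun _ => S, rfl, fun i _ => rfl, by omega, fun i => ⟨S, by simp⟩,
      fun T hT => ⟨0, le_refl _, by simpa using (List.mem_singleton.mp hT).symm⟩,
      fun v _ i j k _ _ _ h => h⟩
  | cons T rest ih =>
    obtain ⟨m₂, N₂, h20, h2stab, h2step, h2sub, h2cov, h2ctg⟩ := ih T
    set d := segLen S T with hd
    set N : ℕ → Finset V := fun i => if i < d then segN S T i else N₂ (i - d) with hN
    have hNlt : ∀ i, i < d → N i = segN S T i := by intro i hi; simp [hN, hi]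
    have hNd : ∀ i, d ≤ i → N i = N₂ (i - d) := by
      intro i hi; simp [hN, Nat.not_lt.mpr hi]
    have hN0 : N 0 = S := by
      by_cases h0 : 0 < d
      · rw [hNlt 0 h0, segN_zero]
      · have hST : S = T := segLen_eq_zero (by omega)
        rw [hNd 0 (by omega)]
        simpa [h20] using hST.symm
    have hNsegd : segN S T d = T := segN_of_ge (le_refl _)
    have hNseg : ∀ i, i ≤ d → N i = segN S T i := by
      intro i hi
      rcases Nat.lt_or_ge i d with h | h
      · exact hNlt i h
      · have hid : i = d := by omega
        rw [hNd i h, hid]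
        simp [hNsegd, h20]
    refine ⟨d + m₂, N, hN0, ?_, ?_, ?_, ?_, ?_⟩
    · -- stability
      intro i hi
      rw [hNd i (by omega), h2stab (i - d) (by omega),
        List.getLast_cons (List.cons_ne_nil T rest)]
    · -- steps
      intro i hi
      rcases Nat.lt_or_ge i d with h | h
      · rw [hNseg i (by omega), hNseg (i+1) (by omega)]
        exact segN_step h
      · rw [hNd i h, hNd (i+1) (by omega), show i + 1 - d = (i - d) + 1 by omega]
        exact h2step (i - d) (by omega)
    · -- subsets
      intro i
      rcases Nat.lt_or_ge i d with h | h
      · rw [hNlt i h]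
        rcases segN_subset S T i with hs | hs
        · exact ⟨S, by simp, hs⟩
        · exact ⟨T, by simp, hs⟩
      · obtain ⟨W, hW, hsub⟩ := h2sub (i - d)
        exact ⟨W, List.mem_cons_of_mem _ hW, by rw [hNd i h]; exact hsub⟩
    · -- coverage
      intro T' hT'
      rcases List.mem_cons.mp hT' with rfl | hT'
      · exact ⟨0, by omega, hN0⟩
      · obtain ⟨i₂, hi₂, heq⟩ := h2cov T' hT'
        refine ⟨d + i₂, by omega, ?_⟩
        rw [hNd (d + i₂) (by omega), Nat.add_sub_cancel_left]
        exact heq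
    · -- contiguity
      intro v hv i j k hij hjk hvi hvk
      have hv₂ : ∀ i j k : ℕ, i ≤ j → j ≤ k → v ∈ (T :: rest).getD i ∅ →
          v ∈ (T :: rest).getD k ∅ → v ∈ (T :: rest).getD j ∅ := by
        intro i j k hij hjk hgi hgk
        have := hv (i+1) (j+1) (k+1) (by omega) (by omega)
          (by rwa [List.getD_cons_succ]) (by rwa [List.getD_cons_succ])
        rwa [List.getD_cons_succ] at this
      by_cases hk : k < d
      · rw [hNlt i (by omega)] at hvi
        rw [hNlt k hk] at hvk
        rw [hNlt j (by omega)]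
        exact segN_ctg hij hjk hvi hvk
      · by_cases hi : i < d
        · have h1 : v ∈ segN S T i := by rwa [hNlt i hi] at hvi
          have h2 : v ∈ N₂ (k - d) := by rwa [hNd k (by omega)] at hvk
          have hvT : v ∈ T := by
            rcases segN_subset S T i with hs | hs
            · have hvS : v ∈ S := hs h1
              obtain ⟨W, hW, hsub⟩ := h2sub (k - d)
              have hvW : v ∈ W := hsub h2
              rcases List.mem_cons.mp hW with rfl | hWr
              · exact hvW
              · obtain ⟨n, hn, hget⟩ := List.mem_iff_getElem.mp hWr
                have hres := hv 0 1 (n+2) (by omega) (by omega)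
                  (by rwa [List.getD_cons_zero])
                  (by rw [List.getD_cons_succ, List.getD_cons_succ,
                        List.getD_eq_getElem _ _ hn, hget]; exact hvW)
                rwa [List.getD_cons_succ, List.getD_cons_zero] at hres
            · exact hs h1
          by_cases hj : j < d
          · have := segN_ctg (S := S) (T := T) (v := v) (i := i) (j := j) (k := d)
              (by omega) (by omega) h1 (by rw [hNsegd]; exact hvT)
            rwa [hNlt j hj]
          · have := h2ctg v hv₂ 0 (j - d) (k - d) (by omega) (by omega)
              (by rw [h20]; exact hvT) h2
            rwa [hNd j (by omega)]
        · have := h2ctg v hv₂ (i - d) (j - d) (k - d) (by omega) (by omega)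
            (by rwa [hNd i (by omega)] at hvi) (by rwa [hNd k (by omega)] at hvk)
          rwa [hNd j (by omega)]

lemma nice_of_pw (G : SimpleGraph V) (p r : ℕ) (Bg : Fin r → Finset V)
    (hcovV : ∀ v, ∃ i, v ∈ Bg i)
    (hcovE : ∀ u w, G.Adj u w → ∃ i, u ∈ Bg i ∧ w ∈ Bg i)
    (hctg : ∀ v, ∀ i j k : Fin r, i ≤ j → j ≤ k → v ∈ Bg i → v ∈ Bg k → v ∈ Bg j)
    (hcard : ∀ i, (Bg i).card ≤ p + 1) :
    ∃ (m : ℕ) (N : ℕ → Finset V),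
      N 0 = ∅ ∧ (∀ i, m ≤ i → N i = ∅) ∧
      (∀ i < m, StepRel (N i) (N (i+1))) ∧
      (∀ i, (N i).card ≤ p + 1) ∧
      (∀ v, ∃ i ≤ m, v ∈ N i) ∧
      (∀ u w, G.Adj u w → ∃ i ≤ m, u ∈ N i ∧ w ∈ N i) ∧
      (∀ v, ∀ i j k : ℕ, i ≤ j → j ≤ k → v ∈ N i → v ∈ N k → v ∈ N j) := by
  set l : List (Finset V) := (List.finRange r).map Bg ++ [∅] with hl
  obtain ⟨m, N, hN0, hstab, hstep, hsub, hcov, hctgN⟩ := exists_nice l ∅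
  have hlast : (∅ :: l).getLast (List.cons_ne_nil ∅ l) = ∅ := by
    have heq : (∅ :: l) = ((∅ :: (List.finRange r).map Bg) ++ [(∅ : Finset V)]) := by
      simp [hl]
    have hgl : ∀ (L1 L2 : List (Finset V)) (h1 : L1 ≠ []) (h2 : L2 ≠ []),
        L1 = L2 → L1.getLast h1 = L2.getLast h2 := by
      rintro L1 _ h1 h2 rfl; rfl
    rw [hgl _ _ _ (by simp) heq]
    exact List.getLast_concat
  have hlen : l.length = r + 1 := by simp [hl]
  have hgetD : ∀ (k : ℕ) (hk : k < r), (∅ :: l).getD (k+1) ∅ = Bg ⟨k, hk⟩ := by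
    intro k hk
    rw [List.getD_cons_succ, List.getD_eq_getElem _ _ (by rw [hlen]; omega)]
    have : l[k]'(by rw [hlen]; omega) = Bg ⟨k, hk⟩ := by
      simp [hl, List.getElem_append, hk, List.getElem_finRange]
    exact this
  have hmemb : ∀ (v : V) (n : ℕ), v ∈ (∅ :: l).getD n ∅ → 1 ≤ n ∧ n ≤ r := by
    intro v n hv
    rcases Nat.eq_zero_or_pos n with rfl | hn
    · rw [List.getD_cons_zero] at hv; simp at hv
    constructor
    · omega
    · by_contra hgt
      push_neg at hgt
      rcases Nat.lt_or_ge n (r + 2) with hlt | hge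
      · have hnr : n = r + 1 := by omega
        rw [hnr, List.getD_cons_succ, List.getD_eq_getElem _ _ (by rw [hlen]; omega)] at hv
        have : l[r]'(by rw [hlen]; omega) = (∅ : Finset V) := by
          simp [hl, List.getElem_append]
        rw [this] at hv
        simp at hv
      · rw [List.getD_eq_default _ _ (by simp [hlen]; omega)] at hv
        simp at hv
  have hvCtg : ∀ v : V, ∀ i j k : ℕ, i ≤ j → j ≤ k → v ∈ (∅ :: l).getD i ∅ →
      v ∈ (∅ :: l).getD k ∅ → v ∈ (∅ :: l).getD j ∅ := by
    intro v i j k hij hjk hgi hgk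
    obtain ⟨hi1, hir⟩ := hmemb v i hgi
    obtain ⟨hk1, hkr⟩ := hmemb v k hgk
    have hj1 : 1 ≤ j := by omega
    have hjr : j ≤ r := by omega
    rw [show i = (i-1)+1 by omega] at hgi
    rw [show k = (k-1)+1 by omega] at hgk
    rw [hgetD (i-1) (by omega)] at hgi
    rw [hgetD (k-1) (by omega)] at hgk
    rw [show j = (j-1)+1 by omega, hgetD (j-1) (by omega)]
    exact hctg v ⟨i-1, by omega⟩ ⟨j-1, by omega⟩ ⟨k-1, by omega⟩
      (by simp [Fin.mk_le_mk]; omega) (by simp [Fin.mk_le_mk]; omega) hgi hgk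
  have hmemBg : ∀ i : Fin r, Bg i ∈ (∅ :: l) :=
    fun i => List.mem_cons_of_mem _ (List.mem_append_left _
      (List.mem_map.mpr ⟨i, List.mem_finRange i, rfl⟩))
  refine ⟨m, N, hN0, ?_, hstep, ?_, ?_, ?_, ?_⟩
  · intro i hi
    rw [hstab i hi, hlast]
  · -- cards
    intro i
    obtain ⟨W, hW, hsubW⟩ := hsub i
    have hcardW : W.card ≤ p + 1 := by
      rcases List.mem_cons.mp hW with rfl | hW'
      · simp
      · rw [hl] at hW'
        rcases List.mem_append.mp hW' with hW' | hW'
        · obtain ⟨idx, _, rfl⟩ := List.mem_map.mp hW'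
          exact hcard idx
        · rw [List.mem_singleton.mp hW']
          simp
    exact le_trans (Finset.card_le_card hsubW) hcardW
  · -- vertex coverage
    intro v
    obtain ⟨i0, hvB⟩ := hcovV v
    obtain ⟨n, hn, heq⟩ := hcov (Bg i0) (hmemBg i0)
    exact ⟨n, hn, heq ▸ hvB⟩
  · -- edge coverage
    intro u w hadj
    obtain ⟨i0, hu, hw⟩ := hcovE u w hadj
    obtain ⟨n, hn, heq⟩ := hcov (Bg i0) (hmemBg i0)
    exact ⟨n, hn, heq ▸ hu, heq ▸ hw⟩
  · -- contiguity
    intro v i j k hij hjk hvi hvk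
    exact hctgN v (hvCtg v) i j k hij hjk hvi hvk

lemma sweep [Fintype V] (B : SimpleGraph V) (p : ℕ)
    (C1 C2 : Finset V)
    (hdisj : Disjoint C1 C2) (hunion : C1 ∪ C2 = Finset.univ)
    (h1 : ∀ u ∈ C1, ∀ v ∈ C1, ¬ B.Adj u v)
    (h2 : ∀ u ∈ C2, ∀ v ∈ C2, ¬ B.Adj u v)
    (a : ℕ) (haC2 : C2.card ≤ a) (ha2 : a ≤ C1.card) (hpos : 1 ≤ a)
    (m : ℕ) (N : ℕ → Finset V)
    (hN0 : N 0 = ∅) (hstab : ∀ i, m ≤ i → N i = ∅)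
    (hstep : ∀ i < m, StepRel (N i) (N (i+1)))
    (hcard : ∀ i, (N i).card ≤ p + 1)
    (hcovV : ∀ v, ∃ i ≤ m, v ∈ N i)
    (hcovE : ∀ u w, B.Adj u w → ∃ i ≤ m, u ∈ N i ∧ w ∈ N i)
    (hctg : ∀ v, ∀ i j k : ℕ, i ≤ j → j ≤ k → v ∈ N i → v ∈ N k → v ∈ N j) :
    ∃ X C1' C2' : Finset V, X.card ≤ p ∧ Disjoint C1' C2' ∧
      C1' ∪ C2' = Finset.univ \ X ∧
      (∀ u ∈ C1', ∀ v ∈ C1', ¬ B.Adj u v) ∧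
      (∀ u ∈ C2', ∀ v ∈ C2', ¬ B.Adj u v) ∧
      C1'.card = a := by
  classical
  -- m ≥ 1
  have hm : 1 ≤ m := by
    have hC1pos : 0 < C1.card := by omega
    obtain ⟨v, hv⟩ := Finset.card_pos.mp hC1pos
    obtain ⟨i, him, hvN⟩ := hcovV v
    by_contra hm0
    have : i = 0 := by omega
    rw [this, hN0] at hvN
    simp at hvN
  set I : ℕ → Finset V := fun i => (Finset.range (i+1)).biUnion N with hI
  have mem_I : ∀ (v : V) (i : ℕ), v ∈ I i ↔ ∃ j ≤ i, v ∈ N j := by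
    intro v i
    simp [hI, Finset.mem_biUnion, Finset.mem_range, Nat.lt_succ_iff]
  set Xf : ℕ → Finset V := fun i => N i ∩ N (i+1) with hXf
  set L : ℕ → Finset V := fun i => I i \ Xf i with hL
  set R : ℕ → Finset V := fun i => Finset.univ \ I i with hR
  set g : ℕ → ℕ := fun i => (C1 ∩ L i).card + (C2 ∩ R i).card with hg
  have hImono : ∀ i, I i ⊆ I (i+1) := by
    intro i v hv
    rw [mem_I] at hv ⊢
    obtain ⟨j, hj, h⟩ := hv
    exact ⟨j, by omega, h⟩
  have hNsubI : ∀ i, N i ⊆ I i := by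
    intro i v hv
    rw [mem_I]; exact ⟨i, le_refl _, hv⟩
  have hXsubN : ∀ i, Xf i ⊆ N (i+1) := fun i => Finset.inter_subset_right
  have hXsubI : ∀ i, Xf i ⊆ I i :=
    fun i => le_trans Finset.inter_subset_left (hNsubI i)
  have hmemL : ∀ (z : V) (i : ℕ), z ∈ L i ↔ z ∈ I i ∧ z ∉ Xf i := by
    intro z i; rw [hL]; exact Finset.mem_sdiff
  have hmemR : ∀ (z : V) (i : ℕ), z ∈ R i ↔ z ∉ I i := by
    intro z i; rw [hR]; simp [Finset.mem_sdiff]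
  have hLmono : ∀ i, L i ⊆ L (i+1) := by
    intro i u hu
    rw [hmemL] at hu ⊢
    obtain ⟨huI, huX⟩ := hu
    refine ⟨hImono i huI, fun huX1 => ?_⟩
    obtain ⟨j, hj, hNj⟩ := (mem_I u i).mp huI
    have huN1 : u ∈ N (i+1) := (Finset.mem_inter.mp huX1).1
    have huNi : u ∈ N i := hctg u j i (i+1) hj (by omega) hNj huN1
    exact huX (Finset.mem_inter.mpr ⟨huNi, huN1⟩)
  have hLgain : ∀ i, i + 1 < m → ∃ x, L (i+1) ⊆ L i ∪ {x} := by
    intro i hi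
    have hIsucc : ∀ u, u ∈ I (i+1) → u ∈ I i ∨ u ∈ N (i+1) := by
      intro u hu
      obtain ⟨j, hj, hNj⟩ := (mem_I u (i+1)).mp hu
      rcases Nat.lt_or_ge j (i+1) with h | h
      · exact Or.inl ((mem_I u i).mpr ⟨j, by omega, hNj⟩)
      · have : j = i + 1 := by omega
        exact Or.inr (this ▸ hNj)
    rcases hstep (i+1) hi with ⟨x, hx, hEq⟩ | ⟨x, hx, hEq⟩
    · -- insert step at i+1 : Xf (i+1) = N (i+1)
      have hX1 : Xf (i+1) = N (i+1) := by
        rw [hXf]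
        simp only
        rw [hEq]
        exact Finset.inter_eq_left.mpr (Finset.subset_insert x _)
      refine ⟨x, fun u hu => ?_⟩
      rw [hmemL] at hu
      obtain ⟨huI, huX⟩ := hu
      rw [hX1] at huX
      rcases hIsucc u huI with h | h
      · apply Finset.mem_union_left
        rw [hmemL]
        exact ⟨h, fun hc => huX (hXsubN i hc)⟩
      · exact absurd h huX
    · -- erase step at i+1 : Xf (i+1) = (N (i+1)).erase x
      have hX1 : Xf (i+1) = (N (i+1)).erase x := by
        rw [hXf]
        simp only
        rw [hEq]
        exact Finset.inter_eq_right.mpr (Finset.erase_subset x _)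
      refine ⟨x, fun u hu => ?_⟩
      rw [hmemL] at hu
      obtain ⟨huI, huX⟩ := hu
      rw [hX1] at huX
      by_cases hux : u = x
      · exact Finset.mem_union_right _ (by simp [hux])
      · have huN1 : u ∉ N (i+1) := fun hc => huX (Finset.mem_erase.mpr ⟨hux, hc⟩)
        rcases hIsucc u huI with h | h
        · apply Finset.mem_union_left
          rw [hmemL]
          exact ⟨h, fun hc => huN1 (hXsubN i hc)⟩
        · exact absurd h huN1
  have hRanti : ∀ i, R (i+1) ⊆ R i := by
    intro i z hz
    rw [hmemR] at hz ⊢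
    exact fun hc => hz (hImono i hc)
  have hgstep : ∀ i, i + 1 < m → g (i+1) ≤ g i + 1 := by
    intro i hi
    obtain ⟨x, hLx⟩ := hLgain i hi
    have c1 : (C1 ∩ L (i+1)).card ≤ (C1 ∩ L i).card + 1 := by
      have hsub : C1 ∩ L (i+1) ⊆ insert x (C1 ∩ L i) := by
        intro u hu
        obtain ⟨hu1, hu2⟩ := Finset.mem_inter.mp hu
        rcases Finset.mem_union.mp (hLx hu2) with h | h
        · exact Finset.mem_insert_of_mem (Finset.mem_inter.mpr ⟨hu1, h⟩)
        · exact Finset.mem_insert.mpr (Or.inl (Finset.mem_singleton.mp h))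
      calc (C1 ∩ L (i+1)).card ≤ (insert x (C1 ∩ L i)).card := Finset.card_le_card hsub
        _ ≤ (C1 ∩ L i).card + 1 := Finset.card_insert_le _ _
    have c2 : (C2 ∩ R (i+1)).card ≤ (C2 ∩ R i).card :=
      Finset.card_le_card (Finset.inter_subset_inter (le_refl _) (hRanti i))
    rw [hg]
    simp only
    omega
  set M := m - 1 with hM
  have hg0 : g 0 = C2.card := by
    have hI0 : I 0 = ∅ := by
      rw [hI]; simp [hN0]
    rw [hg]
    simp only
    rw [hL, hR]
    simp only [hI0, Finset.empty_sdiff, Finset.sdiff_empty, Finset.inter_univ]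
    simp
  have hgM : g M = C1.card := by
    have hIM : I M = Finset.univ := by
      apply Finset.eq_univ_iff_forall.mpr
      intro v
      obtain ⟨j, hj, hvN⟩ := hcovV v
      have hjM : j ≤ M := by
        by_contra hc
        have : j = m := by omega
        rw [this, hstab m (le_refl _)] at hvN
        simp at hvN
      exact (mem_I v M).mpr ⟨j, hjM, hvN⟩
    have hNm : N (M + 1) = ∅ := hstab _ (by omega)
    have hXM : Xf M = ∅ := by
      rw [hXf]; simp only; rw [hNm]; exact Finset.inter_empty _
    rw [hg]
    simp only
    rw [hL, hR]
    simp only [hIM, hXM, Finset.sdiff_empty, Finset.sdiff_self, Finset.inter_univ,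
      Finset.inter_empty, Finset.card_empty]
    omega
  obtain ⟨i, hiM, hgi⟩ := nat_ivt g M a (by omega) (by omega)
    (fun i hi => hgstep i (by omega))
  -- final assembly
  have him : i < m := by omega
  have hsep : ∀ u ∈ L i, ∀ w ∈ R i, ¬ B.Adj u w := by
    intro u hu w hw hadj
    obtain ⟨jj, hjm, huj, hwj⟩ := hcovE u w hadj
    have hwI : w ∉ I i := (hmemR w i).mp hw
    have hji : i < jj := by
      by_contra hc
      push_neg at hc
      exact hwI ((mem_I w i).mpr ⟨jj, hc, hwj⟩)
    obtain ⟨huI, huX⟩ := (hmemL u i).mp hu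
    obtain ⟨j0, hj0, hu0⟩ := (mem_I u i).mp huI
    have hNi : u ∈ N i := hctg u j0 i jj hj0 (by omega) hu0 huj
    have hNi1 : u ∈ N (i+1) := hctg u j0 (i+1) jj (by omega) (by omega) hu0 huj
    exact huX (Finset.mem_inter.mpr ⟨hNi, hNi1⟩)
  have hcardX : (Xf i).card ≤ p := by
    rcases hstep i him with ⟨x, hx, hEq⟩ | ⟨x, hx, hEq⟩
    · have hXi : Xf i = N i := by
        rw [hXf]; simp only; rw [hEq]
        exact Finset.inter_eq_left.mpr (Finset.subset_insert x _)
      have : (N (i+1)).card = (N i).card + 1 := by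
        rw [hEq]; exact Finset.card_insert_of_notMem hx
      have := hcard (i+1)
      rw [hXi]
      omega
    · have hXi : Xf i = (N i).erase x := by
        rw [hXf]; simp only; rw [hEq]
        exact Finset.inter_eq_right.mpr (Finset.erase_subset x _)
      have h1' : ((N i).erase x).card = (N i).card - 1 := Finset.card_erase_of_mem hx
      have h2' : 0 < (N i).card := Finset.card_pos.mpr ⟨x, hx⟩
      have := hcard i
      rw [hXi]
      omega
  have hLR : ∀ z : V, z ∈ L i → z ∈ R i → False := by
    intro z hzL hzR
    exact (hmemR z i).mp hzR ((hmemL z i).mp hzL).1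
  have hz12 : ∀ z : V, z ∈ C1 ∨ z ∈ C2 := by
    intro z
    have : z ∈ C1 ∪ C2 := by rw [hunion]; exact Finset.mem_univ z
    exact Finset.mem_union.mp this
  have hC1C2 : ∀ z : V, z ∈ C1 → z ∈ C2 → False := by
    intro z hz1 hz2
    exact Finset.disjoint_left.mp hdisj hz1 hz2
  refine ⟨Xf i, (C1 ∩ L i) ∪ (C2 ∩ R i), (C2 ∩ L i) ∪ (C1 ∩ R i), hcardX, ?_, ?_, ?_, ?_, ?_⟩
  · -- disjoint
    rw [Finset.disjoint_left]
    intro z hz1 hz2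
    rcases Finset.mem_union.mp hz1 with h | h <;>
      rcases Finset.mem_union.mp hz2 with h' | h' <;>
      [skip; skip; skip; skip] <;>
    · obtain ⟨ha', hb'⟩ := Finset.mem_inter.mp h
      obtain ⟨hc', hd'⟩ := Finset.mem_inter.mp h'
      first
        | exact hC1C2 z ha' hc'
        | exact hC1C2 z hc' ha'
        | exact hLR z hb' hd'
        | exact hLR z hd' hb'
  · -- union
    ext z
    simp only [Finset.mem_union, Finset.mem_inter, Finset.mem_sdiff, Finset.mem_univ, true_and]
    constructor
    · rintro ((⟨hz, hzL⟩ | ⟨hz, hzR⟩) | (⟨hz, hzL⟩ | ⟨hz, hzR⟩)) <;>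
      first
        | exact ((hmemL z i).mp hzL).2
        | exact fun hc => (hmemR z i).mp hzR (hXsubI i hc)
    · intro hzX
      by_cases hzI : z ∈ I i
      · have hzL : z ∈ L i := (hmemL z i).mpr ⟨hzI, hzX⟩
        rcases hz12 z with h | h
        · exact Or.inl (Or.inl ⟨h, hzL⟩)
        · exact Or.inr (Or.inl ⟨h, hzL⟩)
      · have hzR : z ∈ R i := (hmemR z i).mpr hzI
        rcases hz12 z with h | h
        · exact Or.inr (Or.inr ⟨h, hzR⟩)
        · exact Or.inl (Or.inr ⟨h, hzR⟩)
  · -- C1' independent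
    intro u hu v hv hadj
    rcases Finset.mem_union.mp hu with h | h <;> rcases Finset.mem_union.mp hv with h' | h'
    · exact h1 u (Finset.mem_inter.mp h).1 v (Finset.mem_inter.mp h').1 hadj
    · exact hsep u (Finset.mem_inter.mp h).2 v (Finset.mem_inter.mp h').2 hadj
    · exact hsep v (Finset.mem_inter.mp h').2 u (Finset.mem_inter.mp h).2 hadj.symm
    · exact h2 u (Finset.mem_inter.mp h).1 v (Finset.mem_inter.mp h').1 hadj
  · -- C2' independent
    intro u hu v hv hadj
    rcases Finset.mem_union.mp hu with h | h <;> rcases Finset.mem_union.mp hv with h' | h'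
    · exact h2 u (Finset.mem_inter.mp h).1 v (Finset.mem_inter.mp h').1 hadj
    · exact hsep u (Finset.mem_inter.mp h).2 v (Finset.mem_inter.mp h').2 hadj
    · exact hsep v (Finset.mem_inter.mp h').2 u (Finset.mem_inter.mp h).2 hadj.symm
    · exact h1 u (Finset.mem_inter.mp h).1 v (Finset.mem_inter.mp h').1 hadj
  · -- cardinality
    have hdisj' : Disjoint (C1 ∩ L i) (C2 ∩ R i) := by
      rw [Finset.disjoint_left]
      intro z hz1 hz2
      exact hLR z (Finset.mem_inter.mp hz1).2 (Finset.mem_inter.mp hz2).2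
    rw [Finset.card_union_of_disjoint hdisj']
    rw [hg] at hgi
    simpa using hgi

/-- `G` has pathwidth at most `p`: it admits a path-decomposition (a sequence of
bags covering all vertices and edges, whose occurrences of each vertex are
contiguous) all of whose bags have at most `p + 1` vertices. -/
def HasPathwidthLE {V : Type*} (G : SimpleGraph V) (p : ℕ) : Prop :=
  ∃ (r : ℕ) (B : Fin r → Finset V),
    (∀ v, ∃ i, v ∈ B i) ∧
    (∀ u v, G.Adj u v → ∃ i, u ∈ B i ∧ v ∈ B i) ∧
    (∀ v, ∀ i j l : Fin r, i ≤ j → j ≤ l → v ∈ B i → v ∈ B l → v ∈ B j) ∧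
    (∀ i, (B i).card ≤ p + 1)

theorem stmt10 {V : Type} [Fintype V] [DecidableEq V] (B : SimpleGraph V) (p : ℕ)
    (hpw : HasPathwidthLE B p)
    (C1 C2 : Finset V)
    (hdisj : Disjoint C1 C2) (hunion : C1 ∪ C2 = Finset.univ)
    (h1 : ∀ u ∈ C1, ∀ v ∈ C1, ¬ B.Adj u v)
    (h2 : ∀ u ∈ C2, ∀ v ∈ C2, ¬ B.Adj u v)
    (hle : C2.card ≤ C1.card)
    (a : ℕ) (ha1 : C2.card - p ≤ a) (ha2 : a ≤ C1.card) :
    ∃ X C1' C2' : Finset V, X.card ≤ p ∧ Disjoint C1' C2' ∧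
      C1' ∪ C2' = Finset.univ \ X ∧
      (∀ u ∈ C1', ∀ v ∈ C1', ¬ B.Adj u v) ∧
      (∀ u ∈ C2', ∀ v ∈ C2', ¬ B.Adj u v) ∧
      C1'.card = a := by
  by_cases hcase : a ≤ C2.card
  · -- easy case: shrink C2
    obtain ⟨Y, hYsub, hYcard⟩ :=
      Finset.exists_subset_card_eq (show C2.card - a ≤ C2.card by omega)
    refine ⟨Y, C2 \ Y, C1, by omega, ?_, ?_, ?_, ?_, ?_⟩
    · rw [Finset.disjoint_left]
      intro z hz hz1
      exact Finset.disjoint_left.mp hdisj hz1 (Finset.mem_sdiff.mp hz).1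
    · ext z
      simp only [Finset.mem_union, Finset.mem_sdiff, Finset.mem_univ, true_and]
      constructor
      · rintro (⟨_, h⟩ | h)
        · exact h
        · exact fun hc => Finset.disjoint_left.mp hdisj h (hYsub hc)
      · intro hz
        have : z ∈ C1 ∪ C2 := by rw [hunion]; exact Finset.mem_univ z
        rcases Finset.mem_union.mp this with h | h
        · exact Or.inr h
        · exact Or.inl ⟨h, hz⟩
    · intro u hu v hv hadj
      exact h2 u (Finset.mem_sdiff.mp hu).1 v (Finset.mem_sdiff.mp hv).1 hadj
    · exact h1
    · rw [Finset.card_sdiff_of_subset hYsub]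
      omega
  · -- main case: sweep along a nice path-decomposition
    push_neg at hcase
    obtain ⟨r, Bg, hcovV, hcovE, hctg, hcard⟩ := hpw
    obtain ⟨m, N, hN0, hstab, hstep, hcardN, hcovV', hcovE', hctg'⟩ :=
      nice_of_pw B p r Bg hcovV hcovE hctg hcard
    exact sweep B p C1 C2 hdisj hunion h1 h2 a (by omega) ha2 (by omega)
      m N hN0 hstab hstep hcardN hcovV' hcovE' hctg'
end

section
/- Let k ≥ 2 be an integer and c > 0 a real constant. For each n, let F_n be a family of k-colorable graphs, each with exactly n vertices and pathwidth at most p_n, where p_n·k = o(n) as n → ∞. If 𝒰(F_n) ≥ c·n − o(n), then for every sufficiently large n, the family F_n contains more than A(⌈ck⌉−1, 2k−2, k) graphs. -/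
open Filter Asymptotics

/-- The minimum number of vertices of an induced-universal graph for a family
of `n`-vertex graphs. -/
noncomputable def uNumN {n : ℕ} (F : Set (SimpleGraph (Fin n))) : ℕ :=
  sInf {N | ∃ U : SimpleGraph (Fin N), ∀ G ∈ F, Nonempty (G ↪g U)}

/-- `designNumber s k` is the coding-theoretic quantity `A(s, 2k-2, k)`: the maximum
number of `k`-element subsets of an `s`-element set that pairwise intersect in at
most one element. -/
noncomputable def designNumber (s k : ℕ) : ℕ :=
  sSup {m | ∃ 𝒞 : Finset (Finset (Fin s)), 𝒞.card = m ∧ (∀ C ∈ 𝒞, C.card = k) ∧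
    ∀ C ∈ 𝒞, ∀ D ∈ 𝒞, C ≠ D → (C ∩ D).card ≤ 1}


open Finset

/-- Greedy balancing: choose permutations so bin totals stay within `M` of each other. -/
lemma exists_balanced_perms (k M : ℕ) (a : ℕ → Fin k → ℕ)
    (ha : ∀ ℓ j, a ℓ j ≤ M) (Gn : ℕ) :
    ∃ π : ℕ → Equiv.Perm (Fin k),
      ∀ x y, ∑ ℓ ∈ range Gn, a ℓ (π ℓ x) ≤ (∑ ℓ ∈ range Gn, a ℓ (π ℓ y)) + M := by
  induction Gn with
  | zero => exact ⟨fun _ => 1, fun x y => by simp⟩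
  | succ Gn ih =>
    obtain ⟨π, hπ⟩ := ih
    set T : Fin k → ℕ := fun x => ∑ ℓ ∈ range Gn, a ℓ (π ℓ x) with hT
    set σT := Tuple.sort T with hσT
    set σa := Tuple.sort (a Gn) with hσa
    set ρ : Equiv.Perm (Fin k) := σT.symm.trans (Fin.revPerm.trans σa) with hρ
    refine ⟨Function.update π Gn ρ, fun x y => ?_⟩
    have hupd : ∀ ℓ ∈ range Gn, ∀ z : Fin k,
        a ℓ ((Function.update π Gn ρ) ℓ z) = a ℓ (π ℓ z) := by
      intro ℓ hℓ z
      rw [Function.update_of_ne (by simp at hℓ; omega)]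
    rw [Finset.sum_range_succ, Finset.sum_range_succ, Function.update_self]
    rw [Finset.sum_congr rfl (fun ℓ hℓ => hupd ℓ hℓ x),
        Finset.sum_congr rfl (fun ℓ hℓ => hupd ℓ hℓ y)]
    have hρx : ∀ z : Fin k, ρ z = σa ((σT.symm z).rev) := fun z => rfl
    set i := σT.symm x with hi
    set j := σT.symm y with hj
    have hx : T x = (T ∘ σT) i := by simp [hi]
    have hy : T y = (T ∘ σT) j := by simp [hj]
    rcases le_total i j with hij | hij
    · -- T x ≤ T y, a Gn (ρ x) ≤ M
      have h1 : T x ≤ T y := by rw [hx, hy]; exact Tuple.monotone_sort T hij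
      have h2 : a Gn (ρ x) ≤ M := ha _ _
      change T x + a Gn (ρ x) ≤ T y + a Gn (ρ y) + M
      omega
    · -- a Gn (ρ x) ≤ a Gn (ρ y), T x ≤ T y + M
      have h1 : a Gn (ρ x) ≤ a Gn (ρ y) := by
        rw [hρx, hρx]
        exact Tuple.monotone_sort (a Gn) (Fin.rev_le_rev.mpr hij)
      have h2 : T x ≤ T y + M := hπ x y
      change T x + a Gn (ρ x) ≤ T y + a Gn (ρ y) + M
      omega

lemma find_jump (g : ℕ → ℕ) (hg : Monotone g) :
    ∀ c a, a ≤ c → g a < g c → ∃ b, a ≤ b ∧ b < c ∧ g b < g (b + 1) := by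
  intro c
  induction c with
  | zero =>
    intro a ha h
    interval_cases a
    omega
  | succ c ih =>
    intro a ha h
    by_cases hac : g a < g c
    · have ha' : a ≤ c := by
        rcases Nat.lt_or_ge a c with h1 | h1
        · omega
        · exfalso; exact absurd (hg h1) (by omega)
      obtain ⟨b, h1, h2, h3⟩ := ih a ha' hac
      exact ⟨b, h1, by omega, h3⟩
    · have ha' : a ≤ c := by
        rcases Nat.eq_or_lt_of_le ha with h1 | h1
        · exfalso; subst h1; omega
        · omega
      exact ⟨c, ha', by omega, by have := hg ha'; omega⟩

lemma count_jumps (g : ℕ → ℕ) (hg : Monotone g) (r : ℕ) :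
    ((range r).filter (fun b => g b < g (b + 1))).card ≤ g r := by
  induction r with
  | zero => simp
  | succ r ih =>
    rw [Finset.range_add_one, Finset.filter_insert]
    have hr : g r ≤ g (r + 1) := hg (Nat.le_succ r)
    by_cases h : g r < g (r + 1)
    · rw [if_pos h, Finset.card_insert_of_notMem (by simp)]
      have : g r + 1 ≤ g (r + 1) := h
      calc #(filter (fun b => g b < g (b+1)) (range r)) + 1 ≤ g r + 1 := by omega
        _ ≤ g (r + 1) := h
    · rw [if_neg h]
      exact le_trans ih hr

lemma exists_rank (n : ℕ) (S : Finset (Fin n)) :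
    ∃ rk : Fin n → ℕ, (∀ v ∈ S, rk v < S.card) ∧
      (∀ u ∈ S, ∀ v ∈ S, rk u = rk v → u = v) := by
  classical
  refine ⟨fun v => (S.filter (fun u => u < v)).card, ?_, ?_⟩
  · intro v hv
    calc (S.filter (fun u => u < v)).card ≤ (S.erase v).card := by
          apply Finset.card_le_card
          intro u hu
          simp only [mem_filter] at hu
          exact Finset.mem_erase.mpr ⟨ne_of_lt hu.2, hu.1⟩
      _ < S.card := Finset.card_erase_lt_of_mem hv
  · intro u hu v hv h
    by_contra hne
    have key : ∀ a b : Fin n, a ∈ S → b ∈ S → a < b →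
        (S.filter (fun z => z < a)).card < (S.filter (fun z => z < b)).card := by
      intro a b ha hb hab
      apply Finset.card_lt_card
      constructor
      · intro z hz; simp only [mem_filter] at hz ⊢; exact ⟨hz.1, lt_trans hz.2 hab⟩
      · intro hsub
        have := hsub (Finset.mem_filter.mpr ⟨ha, hab⟩)
        simp only [mem_filter] at this
        exact absurd this.2 (lt_irrefl a)
    rcases lt_or_gt_of_ne hne with h1 | h1
    · exact absurd h (ne_of_lt (key u v hu hv h1))
    · exact absurd h (ne_of_gt (key v u hv hu h1))

lemma numeric_contra (k s A n P m sqn t J N : ℕ) (c ε δ DD en : ℝ)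
    (hk : 2 ≤ k)
    (htdef : t = n / k + ((P + 1) + sqn + P + 1) + 1)
    (hJle : J ≤ sqn + 3)
    (hNdef : N = s * t + m * J)
    (hsq2 : sqn * sqn ≤ (P + 1) * n)
    (hmA : m ≤ A)
    (hεdef : ε = c - (s : ℝ) / k)
    (hεpos : 0 < ε)
    (hDDdef : DD = ((s + A + 1 : ℕ) : ℝ))
    (hδdef : δ = min (ε / (16 * DD)) ((ε / (16 * DD)) ^ 2))
    (hδpos : 0 < δ)
    (hE1 : (1 : ℝ) ≤ n)
    (hE2 : (2 / δ : ℝ) ≤ n)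
    (hE3 : (32 * DD / ε : ℝ) ≤ n)
    (hPδ : (P : ℝ) ≤ (δ / 2) * n)
    (hEe : en ≤ (ε / 8) * n)
    (hlbN : c * n - en ≤ (N : ℝ)) : False := by
  have hDD1 : (1 : ℝ) ≤ DD := by rw [hDDdef]; exact_mod_cast Nat.le_add_left 1 (s + A)
  have hDD0 : (0 : ℝ) < DD := by linarith
  have hnR0 : (0:ℝ) ≤ (n:ℝ) := by positivity
  set X : ℝ := ((P + 1 : ℕ) : ℝ) with hX
  have hX0 : (0:ℝ) ≤ X := by positivity
  have hXδ : X ≤ δ * n := by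
    have hp2 : (1:ℝ) ≤ (δ/2) * n := by
      calc (1:ℝ) = (δ/2) * (2/δ) := by field_simp
        _ ≤ (δ/2) * n := mul_le_mul_of_nonneg_left hE2 (by positivity)
    rw [hX]; push_cast; linarith
  set RS := Real.sqrt (X * n) with hRS
  have hsqle : (sqn : ℝ) ≤ RS := by
    rw [hRS, Real.le_sqrt (by positivity) (by positivity)]
    have h : ((sqn * sqn : ℕ) : ℝ) ≤ (((P + 1) * n : ℕ) : ℝ) := by exact_mod_cast hsq2
    push_cast at h
    rw [hX]
    push_cast
    nlinarith [h]
  have hRS0 : (0:ℝ) ≤ RS := Real.sqrt_nonneg _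
  have hRSle : RS ≤ Real.sqrt δ * n := by
    have h1 : X * n ≤ δ * n * n := mul_le_mul_of_nonneg_right hXδ hnR0
    calc RS ≤ Real.sqrt (δ * n * n) := Real.sqrt_le_sqrt h1
      _ = Real.sqrt δ * n := by
        rw [mul_assoc, Real.sqrt_mul (le_of_lt hδpos), Real.sqrt_mul_self hnR0]
  have hsqrtδ : Real.sqrt δ ≤ ε / (16 * DD) := by
    calc Real.sqrt δ ≤ Real.sqrt ((ε / (16 * DD)) ^ 2) := by
          rw [hδdef]; exact Real.sqrt_le_sqrt (min_le_right _ _)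
      _ = ε / (16 * DD) := Real.sqrt_sq (by positivity)
  have hδle : δ ≤ ε / (16 * DD) := by rw [hδdef]; exact min_le_left _ _
  have htR : (t : ℝ) ≤ (n : ℝ) / k + (2 * X + RS) + 1 := by
    have h1 : ((n / k : ℕ) : ℝ) ≤ (n : ℝ) / k := Nat.cast_div_le
    have h3 : (t : ℝ) = ((n / k : ℕ) : ℝ) + ((P:ℝ) + 1 + (sqn:ℝ) + (P:ℝ) + 1) + 1 := by
      rw [htdef]; push_cast; ring
    have h4 : (2 * X + RS) = 2 * ((P:ℝ) + 1) + RS := by rw [hX]; push_cast; ring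
    rw [h3, h4]
    linarith [hsqle]
  have hJR : (J : ℝ) ≤ RS + 3 := by
    calc (J:ℝ) ≤ ((sqn + 3 : ℕ):ℝ) := by exact_mod_cast hJle
      _ ≤ RS + 3 := by push_cast; linarith
  have hsR : (s : ℝ) ≤ DD := by
    have h : s ≤ s + A + 1 := by omega
    rw [hDDdef]; exact_mod_cast h
  have hAR : (A : ℝ) ≤ DD := by
    have h : A ≤ s + A + 1 := by omega
    rw [hDDdef]; exact_mod_cast h
  have hmR : (m : ℝ) ≤ DD := le_trans (by exact_mod_cast hmA) hAR
  have hk0 : (0:ℝ) < k := by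
    have : (0:ℕ) < k := by omega
    exact_mod_cast this
  have hNR : (N : ℝ) ≤ (s : ℝ) / k * n + DD * (2 * X + 2 * RS + 4) := by
    have h1 : (N:ℝ) = (s:ℝ) * t + (m:ℝ) * J := by rw [hNdef]; push_cast; ring
    have h2 : (s:ℝ) * t ≤ (s:ℝ) * ((n:ℝ)/k + (2*X + RS) + 1) :=
      mul_le_mul_of_nonneg_left htR (by positivity)
    have h3 : (m:ℝ) * J ≤ DD * (RS + 3) :=
      mul_le_mul hmR hJR (by positivity) (by positivity)
    have h4 : (s:ℝ) * ((n:ℝ)/k + (2*X + RS) + 1)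
        = (s:ℝ)/k * n + (s:ℝ)*(2*X + RS + 1) := by ring
    have h5 : (s:ℝ)*(2*X + RS + 1) ≤ DD*(2*X + RS + 1) :=
      mul_le_mul_of_nonneg_right hsR (by positivity)
    have h6 : DD * (RS + 3) + DD*(2*X + RS + 1) = DD * (2*X + 2*RS + 4) := by ring
    linarith
  have hb1 : DD * (2 * X) ≤ (ε/8) * n := by
    have h2a : δ * n ≤ (ε/(16*DD)) * n := mul_le_mul_of_nonneg_right hδle hnR0
    have hXq : X ≤ (ε/(16*DD)) * n := le_trans hXδ h2a
    have h1 : DD * X ≤ DD * ((ε/(16*DD)) * n) :=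
      mul_le_mul_of_nonneg_left hXq (le_of_lt hDD0)
    have h3 : DD * ((ε/(16*DD)) * n) = (ε/16) * n := by field_simp
    linarith
  have hb2 : DD * (2 * RS) ≤ (ε/8) * n := by
    have h1 : RS ≤ (ε/(16*DD)) * n :=
      le_trans hRSle (mul_le_mul_of_nonneg_right hsqrtδ hnR0)
    have h2 : DD * RS ≤ DD * ((ε/(16*DD)) * n) :=
      mul_le_mul_of_nonneg_left h1 (le_of_lt hDD0)
    have h3 : DD * ((ε/(16*DD)) * n) = (ε/16) * n := by field_simp
    linarith
  have hb3 : DD * 4 ≤ (ε/8) * n := by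
    have h1 : (ε/8)*(32*DD/ε) ≤ (ε/8) * n := mul_le_mul_of_nonneg_left hE3 (by positivity)
    have h2 : (ε/8)*(32*DD/ε) = 4*DD := by field_simp; ring
    linarith
  have hfin : (N:ℝ) ≤ (s:ℝ)/k * n + (3*ε/8) * n := by
    have hsplit : DD * (2 * X + 2 * RS + 4) = DD * (2*X) + DD * (2*RS) + DD * 4 := by ring
    linarith
  have hcn : c * n = (s:ℝ)/k * n + ε * n := by rw [hεdef]; ring
  have hεn : ε * 1 ≤ ε * n := mul_le_mul_of_nonneg_left hE1 (le_of_lt hεpos)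
  linarith


lemma good_coloring (n k L p : ℕ) (hL : 0 < L)
    (G : SimpleGraph (Fin n)) (φ : G.Coloring (Fin k)) (hpw : HasPathwidthLE G p) :
    ∃ (col : Fin n → Fin k) (jk : Finset (Fin n)),
      (∀ u v, G.Adj u v → u ∉ jk → v ∉ jk → col u ≠ col v) ∧
      (∀ j, k * (Finset.univ.filter (fun v => v ∉ jk ∧ col v = j)).card
          ≤ n + k * (L + p + 1)) ∧
      jk.card ≤ (n / L) * (p + 1) := by
  classical
  obtain ⟨r, B, hcov, hedge, hintv, hsize⟩ := hpw
  -- bags indexed by ℕ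
  set memB : Fin n → ℕ → Prop := fun v x => ∃ h : x < r, v ∈ B ⟨x, h⟩ with hmemB
  have hmemB_intv : ∀ v x1 x2 x3, x1 ≤ x2 → x2 ≤ x3 → memB v x1 → memB v x3 → memB v x2 := by
    intro v x1 x2 x3 h12 h23 ⟨hx1, m1⟩ ⟨hx3, m3⟩
    have hx2 : x2 < r := by omega
    exact ⟨hx2, hintv v ⟨x1, hx1⟩ ⟨x2, hx2⟩ ⟨x3, hx3⟩ h12 h23 m1 m3⟩
  set I : Fin n → Finset ℕ := fun v => (range r).filter (fun x => memB v x) with hIdef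
  have hmemB_of : ∀ (v : Fin n) (i : Fin r), v ∈ B i → memB v i.val := by
    intro v i hi
    exact ⟨i.isLt, by simpa [Fin.eta] using hi⟩
  have hmemI : ∀ (v : Fin n) (i : Fin r), v ∈ B i → i.val ∈ I v := by
    intro v i hi
    simp only [hIdef, mem_filter, mem_range]
    exact ⟨i.isLt, hmemB_of v i hi⟩
  have hI : ∀ v, (I v).Nonempty := by
    intro v
    obtain ⟨i, hi⟩ := hcov v
    exact ⟨i.val, hmemI v i hi⟩
  set f : Fin n → ℕ := fun v => (I v).min' (hI v) with hfdef
  have hfI : ∀ v, f v ∈ I v := fun v => (I v).min'_mem (hI v)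
  have hfmemB : ∀ v, memB v (f v) := by
    intro v; have h := hfI v; rw [hIdef] at h; simp only [mem_filter] at h; exact h.2
  have hfr : ∀ v, f v < r := by
    intro v; have h := hfI v; rw [hIdef] at h
    simp only [mem_filter, mem_range] at h; exact h.1
  have hfle : ∀ v x, x ∈ I v → f v ≤ x := fun v x hx => (I v).min'_le x hx
  set Nc : ℕ → ℕ := fun x => ((univ : Finset (Fin n)).filter (fun v => f v ≤ x)).card with hNcdef
  have hNmono : Monotone Nc := by
    intro x y hxy
    apply Finset.card_le_card
    intro v hv
    simp only [mem_filter] at hv ⊢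
    exact ⟨hv.1, le_trans hv.2 hxy⟩
  have hNle : ∀ x, Nc x ≤ n := by
    intro x
    calc Nc x ≤ (univ : Finset (Fin n)).card := Finset.card_filter_le _ _
      _ = n := by simp
  set g : ℕ → ℕ := fun x => Nc x / L with hgdef
  have hgmono : Monotone g := fun x y h => Nat.div_le_div_right (hNmono h)
  have hgle : ∀ x, g x ≤ n / L := fun x => Nat.div_le_div_right (hNle x)
  set jk : Finset (Fin n) := univ.filter (fun v => ∃ x ∈ I v, g x ≠ g (f v)) with hjkdef
  have hnj : ∀ v, v ∉ jk → ∀ x ∈ I v, g x = g (f v) := by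
    intro v hv x hx
    by_contra h
    exact hv (by simp [hjkdef]; exact ⟨x, hx, h⟩)
  -- the global rank function
  set idx : Fin n → ℕ := fun v => (univ.filter (fun u => f u = f v ∧ u < v)).card with hidxdef
  set A : Fin n → ℕ := fun v => (univ.filter (fun u => f u < f v)).card with hAdef
  set w : Fin n → ℕ := fun v => (univ.filter (fun u => f u = f v)).card with hwdef
  set ρ : Fin n → ℕ := fun v => A v + idx v with hρdef
  have hsplit : ∀ v, Nc (f v) = A v + w v := by
    intro v
    have hset : (univ.filter (fun u => f u ≤ f v))
        = (univ.filter (fun u => f u < f v)) ∪ (univ.filter (fun u => f u = f v)) := by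
      ext u; simp only [mem_union, mem_filter, mem_univ, true_and]; omega
    rw [hNcdef]
    simp only []
    rw [hset, Finset.card_union_of_disjoint]
    rw [Finset.disjoint_filter]
    intro u _ h1; omega
  have hwle : ∀ v, w v ≤ p + 1 := by
    intro v
    refine le_trans (Finset.card_le_card ?_) (hsize ⟨f v, hfr v⟩)
    intro u hu
    simp only [hwdef, mem_filter] at hu
    obtain ⟨h1, hmem⟩ := (hu.2 ▸ hfmemB u : memB u (f v))
    exact hmem
  have hidxw : ∀ v, idx v < w v := by
    intro v
    apply Finset.card_lt_card
    constructor
    · intro u hu; simp only [mem_filter] at hu ⊢; exact ⟨hu.1, hu.2.1⟩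
    · intro hsub
      have hv : v ∈ univ.filter (fun u => f u = f v) := by simp
      have := hsub hv
      simp only [mem_filter] at this
      exact absurd this.2.2 (lt_irrefl v)
  have hρlt : ∀ v, ρ v < Nc (f v) := by
    intro v; rw [hsplit v]; have := hidxw v; simp only [hρdef]; omega
  have hρge : ∀ v, Nc (f v) ≤ ρ v + (p + 1) := by
    intro v; rw [hsplit v]; have := hwle v; simp only [hρdef]; omega
  have hρinj : Function.Injective ρ := by
    intro u v huv
    rcases lt_trichotomy (f u) (f v) with hf | hf | hf
    · exfalso
      have h1 : Nc (f u) ≤ A v := by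
        apply Finset.card_le_card
        intro z hz; simp only [mem_filter, mem_univ, true_and] at hz ⊢; omega
      have h2 := hρlt u
      have h3 : A v ≤ ρ v := by simp only [hρdef]; omega
      omega
    · -- f u = f v
      by_contra hne
      have hAeq : A u = A v := by
        simp only [hAdef]; congr 1; ext z
        simp only [mem_filter, mem_univ, true_and]; omega
      rcases lt_or_gt_of_ne hne with hlt | hlt
      · have : idx u < idx v := by
          apply Finset.card_lt_card
          constructor
          · intro z hz; simp only [mem_filter, mem_univ, true_and] at hz ⊢
            exact ⟨by omega, lt_trans hz.2 hlt⟩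
          · intro hsub
            have hu2 : u ∈ univ.filter (fun z => f z = f v ∧ z < v) := by
              simp only [mem_filter, mem_univ, true_and]; exact ⟨hf, hlt⟩
            have := hsub hu2
            simp only [mem_filter] at this
            exact absurd this.2.2 (lt_irrefl u)
        simp only [hρdef] at huv; omega
      · have : idx v < idx u := by
          apply Finset.card_lt_card
          constructor
          · intro z hz; simp only [mem_filter, mem_univ, true_and] at hz ⊢
            exact ⟨by omega, lt_trans hz.2 hlt⟩
          · intro hsub
            have hv2 : v ∈ univ.filter (fun z => f z = f u ∧ z < u) := by
              simp only [mem_filter, mem_univ, true_and]; exact ⟨hf.symm, hlt⟩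
            have := hsub hv2
            simp only [mem_filter] at this
            exact absurd this.2.2 (lt_irrefl v)
        simp only [hρdef] at huv; omega
    · exfalso
      have h1 : Nc (f v) ≤ A u := by
        apply Finset.card_le_card
        intro z hz; simp only [mem_filter, mem_univ, true_and] at hz ⊢; omega
      have h2 := hρlt v
      have h3 : A u ≤ ρ u := by simp only [hρdef]; omega
      omega
  have hgroup : ∀ ℓ, ((univ : Finset (Fin n)).filter (fun v => g (f v) = ℓ)).card
      ≤ L + p + 1 := by
    intro ℓ
    have hmaps : ∀ v ∈ (univ : Finset (Fin n)).filter (fun v => g (f v) = ℓ),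
        ρ v ∈ Finset.Ico (ℓ * L - (p + 1)) (ℓ * L + L) := by
      intro v hv
      simp only [mem_filter, mem_univ, true_and] at hv
      have hveq : Nc (f v) / L = ℓ := hv
      have hdm : L * (Nc (f v) / L) + Nc (f v) % L = Nc (f v) := Nat.div_add_mod _ _
      rw [hveq, Nat.mul_comm] at hdm
      have hml : Nc (f v) % L < L := Nat.mod_lt _ hL
      have hlow : ℓ * L ≤ Nc (f v) := by omega
      have hhigh : Nc (f v) < ℓ * L + L := by omega
      have h1 := hρlt v
      have h2 := hρge v
      rw [Finset.mem_Ico]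
      omega
    calc ((univ : Finset (Fin n)).filter (fun v => g (f v) = ℓ)).card
        ≤ (Finset.Ico (ℓ * L - (p + 1)) (ℓ * L + L)).card :=
          Finset.card_le_card_of_injOn ρ hmaps (fun x _ y _ h => hρinj h)
      _ ≤ L + p + 1 := by rw [Nat.card_Ico]; omega
  -- junk bound
  have hjunk : jk.card ≤ (n / L) * (p + 1) := by
    set jumps : Finset ℕ := (range r).filter (fun b => g b < g (b + 1)) with hjumpsdef
    set bigB : ℕ → Finset (Fin n) := fun b => if h : b + 1 < r then B ⟨b + 1, h⟩ else ∅
      with hbigBdef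
    have hsub : jk ⊆ jumps.biUnion bigB := by
      intro v hv
      rw [hjkdef] at hv
      simp only [mem_filter, mem_univ, true_and] at hv
      obtain ⟨x, hxI, hgx⟩ := hv
      have hxr : x < r := by
        rw [hIdef] at hxI; simp only [mem_filter, mem_range] at hxI; exact hxI.1
      have hxB : memB v x := by
        rw [hIdef] at hxI; simp only [mem_filter] at hxI; exact hxI.2
      have hfx : f v ≤ x := hfle v x hxI
      have hglt : g (f v) < g x := lt_of_le_of_ne (hgmono hfx) (Ne.symm hgx)
      obtain ⟨b, hb1, hb2, hb3⟩ := find_jump g hgmono x (f v) hfx hglt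
      have hbr : b + 1 < r := by omega
      have hvB : memB v (b + 1) :=
        hmemB_intv v (f v) (b + 1) x (by omega) (by omega) (hfmemB v) hxB
      rw [Finset.mem_biUnion]
      refine ⟨b, ?_, ?_⟩
      · rw [hjumpsdef]; simp only [mem_filter, mem_range]; exact ⟨by omega, hb3⟩
      · rw [hbigBdef]; simp only []
        rw [dif_pos hbr]
        obtain ⟨h', hm⟩ := hvB
        exact hm
    calc jk.card ≤ (jumps.biUnion bigB).card := Finset.card_le_card hsub
      _ ≤ ∑ b ∈ jumps, (bigB b).card := Finset.card_biUnion_le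
      _ ≤ jumps.card * (p + 1) := by
          rw [← smul_eq_mul]
          apply Finset.sum_le_card_nsmul
          intro b _
          rw [hbigBdef]; simp only []
          split
          · exact hsize _
          · simp
      _ ≤ (n / L) * (p + 1) := by
          apply Nat.mul_le_mul_right
          calc jumps.card ≤ g r := count_jumps g hgmono r
            _ ≤ n / L := hgle r
  -- balanced permutations
  set a : ℕ → Fin k → ℕ := fun ℓ j =>
    ((univ : Finset (Fin n)).filter (fun v => v ∉ jk ∧ g (f v) = ℓ ∧ φ v = j)).card with hadef
  have ha : ∀ ℓ j, a ℓ j ≤ L + p + 1 := by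
    intro ℓ j
    refine le_trans (Finset.card_le_card ?_) (hgroup ℓ)
    intro v hv; simp only [hadef, mem_filter] at *; tauto
  obtain ⟨π, hπ⟩ := exists_balanced_perms k (L + p + 1) a ha (n / L + 1)
  set col : Fin n → Fin k := fun v => (π (g (f v))).symm (φ v) with hcoldef
  refine ⟨col, jk, ?_, ?_, hjunk⟩
  · -- propriety
    intro u v huv hu hv
    obtain ⟨i, hui, hvi⟩ := hedge u v huv
    have hiu : i.val ∈ I u := hmemI u i hui
    have hiv : i.val ∈ I v := hmemI v i hvi
    have hgu : g (f u) = g (i.val) := (hnj u hu i.val hiu).symm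
    have hgv : g (f v) = g (i.val) := (hnj v hv i.val hiv).symm
    have hgeq : g (f u) = g (f v) := by rw [hgu, hgv]
    simp only [hcoldef, hgeq]
    intro h
    exact φ.valid huv ((π (g (f v))).symm.injective h)
  · -- class bound
    intro j
    set M := L + p + 1 with hM
    set Cj := univ.filter (fun v => v ∉ jk ∧ col v = j) with hCjdef
    have hfib : ∀ v ∈ Cj, g (f v) ∈ range (n / L + 1) := by
      intro v _
      rw [mem_range]
      have := hgle (f v); omega
    have hcard : Cj.card = ∑ ℓ ∈ range (n / L + 1), a ℓ (π ℓ j) := by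
      rw [Finset.card_eq_sum_card_fiberwise hfib]
      apply Finset.sum_congr rfl
      intro ℓ _
      have hfe : Cj.filter (fun v => g (f v) = ℓ)
          = univ.filter (fun v : Fin n => v ∉ jk ∧ g (f v) = ℓ ∧ φ v = π ℓ j) := by
        rw [hCjdef, Finset.filter_filter]
        apply Finset.filter_congr
        intro v _
        simp only [hcoldef]
        constructor
        · rintro ⟨⟨h1, h2⟩, h3⟩
          refine ⟨h1, h3, ?_⟩
          rw [← h2, h3]
          simp
        · rintro ⟨h1, h2, h3⟩
          refine ⟨⟨h1, ?_⟩, h2⟩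
          rw [h2, h3]
          simp
      rw [hfe]
    have hsum2 : ∀ y : Fin k, ∑ ℓ ∈ range (n / L + 1), a ℓ (π ℓ y)
        = ∑ ℓ ∈ range (n / L + 1),
            (univ.filter (fun v : Fin n => v ∉ jk ∧ g (f v) = ℓ ∧ φ v = π ℓ y)).card := by
      intro y; rfl
    have htot : ∑ y : Fin k, ∑ ℓ ∈ range (n / L + 1), a ℓ (π ℓ y) ≤ n := by
      rw [Finset.sum_comm]
      have hin : ∀ ℓ ∈ range (n / L + 1), ∑ y : Fin k, a ℓ (π ℓ y)
          = (univ.filter (fun v : Fin n => v ∉ jk ∧ g (f v) = ℓ)).card := by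
        intro ℓ _
        rw [Equiv.sum_comp (π ℓ) (fun y => a ℓ y)]
        rw [Finset.card_eq_sum_card_fiberwise (f := fun v => φ v)
          (t := (univ : Finset (Fin k))) (fun v _ => mem_univ _)]
        apply Finset.sum_congr rfl
        intro y _
        show a ℓ y = _
        rw [hadef, Finset.filter_filter]
        show #(filter (fun v => v ∉ jk ∧ g (f v) = ℓ ∧ φ v = y) univ) = _
        congr 1
        apply Finset.filter_congr
        intro v _
        tauto
      rw [Finset.sum_congr rfl hin]
      have hfib2 : ∀ v ∈ univ.filter (fun v : Fin n => v ∉ jk),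
          g (f v) ∈ range (n / L + 1) := by
        intro v _; rw [mem_range]; have := hgle (f v); omega
      calc ∑ ℓ ∈ range (n / L + 1),
            (univ.filter (fun v : Fin n => v ∉ jk ∧ g (f v) = ℓ)).card
          = ∑ ℓ ∈ range (n / L + 1),
            ((univ.filter (fun v : Fin n => v ∉ jk)).filter (fun v => g (f v) = ℓ)).card :=
            Finset.sum_congr rfl (fun ℓ _ => by rw [Finset.filter_filter])
        _ = (univ.filter (fun v : Fin n => v ∉ jk)).card :=
            (Finset.card_eq_sum_card_fiberwise hfib2).symm
        _ ≤ (univ : Finset (Fin n)).card := Finset.card_filter_le _ _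
        _ = n := by simp
    have hle : ∀ y : Fin k, Cj.card ≤ (∑ ℓ ∈ range (n / L + 1), a ℓ (π ℓ y)) + M := by
      intro y; rw [hcard]; exact hπ j y
    calc k * Cj.card = ∑ _y : Fin k, Cj.card := by
          simp [Finset.sum_const, Finset.card_univ, mul_comm]
      _ ≤ ∑ y : Fin k, ((∑ ℓ ∈ range (n / L + 1), a ℓ (π ℓ y)) + M) :=
          Finset.sum_le_sum (fun y _ => hle y)
      _ = (∑ y : Fin k, ∑ ℓ ∈ range (n / L + 1), a ℓ (π ℓ y)) + k * M := by
          rw [Finset.sum_add_distrib]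
          simp [Finset.sum_const, Finset.card_univ, mul_comm]
      _ ≤ n + k * M := by omega

lemma exists_universal (n k s t J m : ℕ)
    (Gr : Fin m → SimpleGraph (Fin n))
    (col : Fin m → Fin n → Fin k)
    (jk : Fin m → Finset (Fin n))
    (σ : Fin m → Fin k → Fin s)
    (slot : Fin m → Fin n → Fin t)
    (jslot : Fin m → Fin n → Fin J)
    (hσinj : ∀ i, Function.Injective (σ i))
    (hcross : ∀ i i', i ≠ i' → ∀ j1 j2 j1' j2', j1 ≠ j2 →
      σ i' j1' = σ i j1 → σ i' j2' = σ i j2 → False)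
    (hprop : ∀ i u v, (Gr i).Adj u v → u ∉ jk i → v ∉ jk i → col i u ≠ col i v)
    (hslot : ∀ i u v, u ∉ jk i → v ∉ jk i → col i u = col i v →
      slot i u = slot i v → u = v)
    (hjslot : ∀ i u v, u ∈ jk i → v ∈ jk i → jslot i u = jslot i v → u = v) :
    ∃ U : SimpleGraph ((Fin s × Fin t) ⊕ (Fin m × Fin J)),
      ∀ i, Nonempty (Gr i ↪g U) := by
  classical
  set ε : Fin m → Fin n → (Fin s × Fin t) ⊕ (Fin m × Fin J) := fun i v =>
    if v ∈ jk i then Sum.inr (i, jslot i v) else Sum.inl (σ i (col i v), slot i v)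
    with hεdef
  have hεinj : ∀ i, Function.Injective (ε i) := by
    intro i u v h
    simp only [hεdef] at h
    by_cases hu : u ∈ jk i <;> by_cases hv : v ∈ jk i <;>
      simp only [hu, hv, if_pos, if_neg, if_true, if_false] at h
    · injection h with h'
      exact hjslot i u v hu hv (congrArg Prod.snd h')
    · exact absurd h (by simp)
    · exact absurd h (by simp)
    · injection h with h'
      have h1 : σ i (col i u) = σ i (col i v) := congrArg Prod.fst h'
      have h2 : slot i u = slot i v := congrArg Prod.snd h'
      exact hslot i u v hu hv (hσinj i h1) h2
  set U : SimpleGraph ((Fin s × Fin t) ⊕ (Fin m × Fin J)) :=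
    { Adj := fun x y => x ≠ y ∧ ∃ i u v, (Gr i).Adj u v ∧ ε i u = x ∧ ε i v = y
      symm := by
        constructor
        rintro x y ⟨hne, i, u, v, hadj, hu, hv⟩
        exact ⟨hne.symm, i, v, u, hadj.symm, hv, hu⟩
      loopless := by constructor; rintro x ⟨hne, _⟩; exact hne rfl } with hUdef
  refine ⟨U, fun i => ⟨⟨⟨ε i, hεinj i⟩, ?_⟩⟩⟩
  intro u v
  simp only [hUdef, Function.Embedding.coeFn_mk]
  constructor
  · rintro ⟨hne, i', u', v', hadj, hu, hv⟩
    by_cases hii : i' = i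
    · subst hii
      rw [hεinj i' hu, hεinj i' hv] at hadj
      exact hadj
    · exfalso
      -- u' must be non-junk, and u non-junk
      by_cases hju' : u' ∈ jk i'
      · apply hii
        by_cases hju : u ∈ jk i
        · simp only [hεdef, if_pos hju', if_pos hju] at hu
          injection hu with h'
          exact congrArg Prod.fst h'
        · simp only [hεdef, if_pos hju', if_neg hju] at hu
          exact absurd hu (by simp)
      · by_cases hjv' : v' ∈ jk i'
        · apply hii
          by_cases hjv : v ∈ jk i
          · simp only [hεdef, if_pos hjv', if_pos hjv] at hv
            injection hv with h'
            exact congrArg Prod.fst h'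
          · simp only [hεdef, if_pos hjv', if_neg hjv] at hv
            exact absurd hv (by simp)
        · -- both u', v' non-junk
          by_cases hju : u ∈ jk i
          · simp only [hεdef, if_neg hju', if_pos hju] at hu
            exact absurd hu (by simp)
          · by_cases hjv : v ∈ jk i
            · simp only [hεdef, if_neg hjv', if_pos hjv] at hv
              exact absurd hv (by simp)
            · simp only [hεdef, if_neg hju', if_neg hju, if_neg hjv', if_neg hjv] at hu hv
              injection hu with hu'
              injection hv with hv'
              have h1 : σ i' (col i' u') = σ i (col i u) := congrArg Prod.fst hu'
              have h2 : σ i' (col i' v') = σ i (col i v) := congrArg Prod.fst hv'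
              exact hcross i i' (fun he => hii he.symm) (col i u) (col i v) (col i' u') (col i' v')
                (fun he => hprop i' u' v' hadj hju' hjv'
                  (by
                    apply hσinj i'
                    rw [h1, h2, he]))
                h1 h2
  · intro h
    exact ⟨fun he => h.ne (hεinj i he), i, u, v, h, rfl, rfl⟩


set_option maxHeartbeats 1000000 in
theorem stmt12 (k : ℕ) (hk : 2 ≤ k) (c : ℝ) (hc : 0 < c)
    (F : ∀ n : ℕ, Set (SimpleGraph (Fin n))) (p : ℕ → ℕ)
    (hcol : ∀ n, ∀ G ∈ F n, G.Colorable k)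
    (hpw : ∀ n, ∀ G ∈ F n, HasPathwidthLE G (p n))
    (ho : (fun n : ℕ => ((p n * k : ℕ) : ℝ)) =o[Filter.atTop] (fun n : ℕ => (n : ℝ)))
    (err : ℕ → ℝ) (herr : err =o[Filter.atTop] (fun n : ℕ => (n : ℝ)))
    (hlb : ∀ n : ℕ, c * (n : ℝ) - err n ≤ (uNumN (F n) : ℝ)) :
    ∀ᶠ n : ℕ in Filter.atTop,
      designNumber (⌈c * (k : ℝ)⌉₊ - 1) k < (F n).ncard := by
  classical
  set s := ⌈c * (k : ℝ)⌉₊ - 1 with hs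
  set A := designNumber s k with hA
  -- a maximum design family
  obtain ⟨𝒞, h𝒞card, h𝒞k, h𝒞int⟩ : ∃ 𝒞 : Finset (Finset (Fin s)),
      𝒞.card = A ∧ (∀ C ∈ 𝒞, C.card = k) ∧
      ∀ C ∈ 𝒞, ∀ D ∈ 𝒞, C ≠ D → (C ∩ D).card ≤ 1 := by
    have h0 : (0 : ℕ) ∈ {m | ∃ 𝒞 : Finset (Finset (Fin s)), 𝒞.card = m ∧
        (∀ C ∈ 𝒞, C.card = k) ∧
        ∀ C ∈ 𝒞, ∀ D ∈ 𝒞, C ≠ D → (C ∩ D).card ≤ 1} := ⟨∅, by simp⟩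
    have hbdd : BddAbove {m | ∃ 𝒞 : Finset (Finset (Fin s)), 𝒞.card = m ∧
        (∀ C ∈ 𝒞, C.card = k) ∧
        ∀ C ∈ 𝒞, ∀ D ∈ 𝒞, C ≠ D → (C ∩ D).card ≤ 1} := by
      refine ⟨2 ^ s, ?_⟩
      rintro m ⟨𝒞, hc, -, -⟩
      rw [← hc]
      calc 𝒞.card ≤ Fintype.card (Finset (Fin s)) := Finset.card_le_univ 𝒞
        _ = 2 ^ s := by rw [Fintype.card_finset, Fintype.card_fin]
    exact Nat.sSup_mem ⟨0, h0⟩ hbdd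
  have hk0 : (0 : ℝ) < k := by exact_mod_cast Nat.lt_of_lt_of_le (by norm_num) hk
  have hsck : (s : ℝ) < c * k := by
    have h1 : 1 ≤ ⌈c * (k : ℝ)⌉₊ := Nat.one_le_ceil_iff.mpr (by positivity)
    have h2 : (s : ℝ) + 1 = (⌈c * (k : ℝ)⌉₊ : ℝ) := by
      rw [hs]; push_cast [Nat.cast_sub h1]; ring
    have h3 : (⌈c * (k : ℝ)⌉₊ : ℝ) < c * k + 1 := Nat.ceil_lt_add_one (by positivity)
    linarith
  set ε := c - (s : ℝ) / k with hε
  have hεpos : 0 < ε := by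
    rw [hε]
    have : (s : ℝ) / k < c := by rw [div_lt_iff₀ hk0]; linarith
    linarith
  set DD := ((s + A + 1 : ℕ) : ℝ) with hDD
  have hDD1 : (1 : ℝ) ≤ DD := by rw [hDD]; exact_mod_cast Nat.le_add_left 1 (s + A)
  have hDD0 : (0 : ℝ) < DD := by linarith
  set δ := min (ε / (16 * DD)) ((ε / (16 * DD)) ^ 2) with hδ
  have hδpos : 0 < δ := by
    rw [hδ]
    apply lt_min
    · positivity
    · positivity
  -- eventual bounds
  have Ev1 : ∀ᶠ n : ℕ in atTop, ((p n * k : ℕ) : ℝ) ≤ (δ / 2) * n := by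
    have h := ho.def (show (0 : ℝ) < δ / 2 by positivity)
    filter_upwards [h] with n hn
    rw [Real.norm_eq_abs, Real.norm_eq_abs, abs_of_nonneg (by positivity),
      abs_of_nonneg (by positivity)] at hn
    exact hn
  have Ev2 : ∀ᶠ n : ℕ in atTop, err n ≤ (ε / 8) * n := by
    have h := herr.def (show (0 : ℝ) < ε / 8 by positivity)
    filter_upwards [h] with n hn
    rw [Real.norm_eq_abs, Real.norm_eq_abs, abs_of_nonneg (show (0:ℝ) ≤ (n:ℝ) by positivity)] at hn
    exact le_trans (le_abs_self _) hn
  have E3a : ∀ᶠ n : ℕ in atTop, (1 : ℝ) ≤ n :=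
    tendsto_natCast_atTop_atTop.eventually_ge_atTop 1
  have E3b : ∀ᶠ n : ℕ in atTop, (2 / δ : ℝ) ≤ n :=
    tendsto_natCast_atTop_atTop.eventually_ge_atTop _
  have E3c : ∀ᶠ n : ℕ in atTop, (32 * DD / ε : ℝ) ≤ n :=
    tendsto_natCast_atTop_atTop.eventually_ge_atTop _
  filter_upwards [Ev1, Ev2, E3a, E3b, E3c] with n hEo hEe hE1 hE2 hE3
  by_contra hcon
  push_neg at hcon
  -- hcon : (F n).ncard ≤ A
  set m := (F n).ncard with hm
  have hn1 : 1 ≤ n := by exact_mod_cast hE1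
  -- index the graphs of the family
  have hFfin : (F n).Finite := Set.toFinite _
  have hFscard : Fintype.card ↥(hFfin.toFinset) = m := by
    rw [Fintype.card_coe, hm, Set.ncard_eq_toFinset_card _ hFfin]
  set eF := Fintype.equivFinOfCardEq hFscard with heF
  set Gr : Fin m → SimpleGraph (Fin n) := fun i => ((eF.symm i : ↥(hFfin.toFinset)) : SimpleGraph (Fin n)) with hGr
  have hGmem : ∀ i, Gr i ∈ F n := fun i => hFfin.mem_toFinset.mp (eF.symm i).2
  have hGsurj : ∀ G ∈ F n, ∃ i, Gr i = G := by
    intro G hG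
    refine ⟨eF ⟨G, hFfin.mem_toFinset.mpr hG⟩, ?_⟩
    rw [hGr]
    simp
  -- index the design sets
  obtain ⟨𝒞', h𝒞'sub, h𝒞'card⟩ := Finset.exists_subset_card_eq
    (show m ≤ 𝒞.card by rw [h𝒞card]; exact hcon)
  have h𝒞'c : Fintype.card ↥𝒞' = m := by rw [Fintype.card_coe, h𝒞'card]
  set eC := Fintype.equivFinOfCardEq h𝒞'c with heC
  set Cf : Fin m → Finset (Fin s) := fun i => ((eC.symm i : ↥𝒞') : Finset (Fin s)) with hCf
  have hCinj : Function.Injective Cf := by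
    intro i j h
    rw [hCf] at h
    have := Subtype.coe_injective h
    exact eC.symm.injective this
  have hCmem : ∀ i, Cf i ∈ 𝒞 := fun i => h𝒞'sub (eC.symm i).2
  have hCk : ∀ i, (Cf i).card = k := fun i => h𝒞k _ (hCmem i)
  set σf : Fin m → Fin k → Fin s := fun i j => (((Cf i).orderIsoOfFin (hCk i) j : ↥(Cf i)) : Fin s) with hσf
  have hσmem : ∀ i j, σf i j ∈ Cf i := fun i j => ((Cf i).orderIsoOfFin (hCk i) j).2
  have hσinj : ∀ i, Function.Injective (σf i) := by
    intro i a b h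
    rw [hσf] at h
    exact ((Cf i).orderIsoOfFin (hCk i)).injective (Subtype.coe_injective h)
  have hcross : ∀ i i', i ≠ i' → ∀ j1 j2 j1' j2', j1 ≠ j2 →
      σf i' j1' = σf i j1 → σf i' j2' = σf i j2 → False := by
    intro i i' hii j1 j2 j1' j2' hj h1 h2
    have hne : σf i j1 ≠ σf i j2 := fun h => hj (hσinj i h)
    have hsub2 : ({σf i j1, σf i j2} : Finset (Fin s)) ⊆ Cf i ∩ Cf i' := by
      intro x hx
      rcases Finset.mem_insert.mp hx with h | h
      · subst h
        exact Finset.mem_inter.mpr ⟨hσmem i j1, h1 ▸ hσmem i' j1'⟩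
      · rw [Finset.mem_singleton] at h
        subst h
        exact Finset.mem_inter.mpr ⟨hσmem i j2, h2 ▸ hσmem i' j2'⟩
    have h2le : 2 ≤ ((Cf i) ∩ (Cf i')).card := by
      calc 2 = ({σf i j1, σf i j2} : Finset (Fin s)).card := (Finset.card_pair hne).symm
        _ ≤ _ := Finset.card_le_card hsub2
    have hCne : Cf i ≠ Cf i' := fun h => hii (hCinj h)
    have := h𝒞int _ (hCmem i) _ (hCmem i') hCne
    omega
  -- parameters
  set P := p n with hP
  set sqn := Nat.sqrt ((P + 1) * n) with hsqn
  set L := (P + 1) + sqn with hLdef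
  have hL : 0 < L := by omega
  set M := L + P + 1 with hMdef
  set t := n / k + M + 1 with htdef
  set J := (n / L) * (P + 1) + 1 with hJdef
  have htpos : 0 < t := Nat.succ_pos _
  have hJpos : 0 < J := Nat.succ_pos _
  -- good colorings for each graph
  have hcolor : ∀ i : Fin m, ∃ col : Fin n → Fin k, ∃ jk : Finset (Fin n),
      (∀ u v, (Gr i).Adj u v → u ∉ jk → v ∉ jk → col u ≠ col v) ∧
      (∀ j, k * (Finset.univ.filter (fun v => v ∉ jk ∧ col v = j)).card
          ≤ n + k * (L + P + 1)) ∧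
      jk.card ≤ (n / L) * (P + 1) := by
    intro i
    exact good_coloring n k L P hL (Gr i) (hcol n (Gr i) (hGmem i)).some
      (hpw n (Gr i) (hGmem i))
  choose col jk hpropG hclass hjunk using hcolor
  -- slots
  choose rk hrk1 hrk2 using fun S : Finset (Fin n) => exists_rank n S
  have hclasslt : ∀ (i : Fin m) (j : Fin k),
      (Finset.univ.filter (fun v => v ∉ jk i ∧ col i v = j)).card < t := by
    intro i j
    have h1 := hclass i j
    by_contra hle
    push_neg at hle
    have h5 : k * t ≤ k * (Finset.univ.filter (fun v => v ∉ jk i ∧ col i v = j)).card :=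
      Nat.mul_le_mul_left k hle
    have hdm : k * (n / k) + n % k = n := Nat.div_add_mod n k
    have hrem : n % k < k := Nat.mod_lt _ (by omega)
    have h6 : k * t = k * (n / k) + k * (L + P + 1) + k := by rw [htdef, hMdef]; ring
    rw [h6] at h5
    linarith
  have hjlt : ∀ i : Fin m, (jk i).card < J := fun i => by
    have := hjunk i; omega
  set classSet : Fin m → Fin k → Finset (Fin n) :=
    fun i j => Finset.univ.filter (fun v => v ∉ jk i ∧ col i v = j) with hclassSet
  set slot : Fin m → Fin n → Fin t :=
    fun i v => ⟨min (rk (classSet i (col i v)) v) (t - 1),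
      lt_of_le_of_lt (min_le_right _ _) (Nat.sub_lt htpos Nat.one_pos)⟩ with hslotdef
  set jslot : Fin m → Fin n → Fin J :=
    fun i v => ⟨min (rk (jk i) v) (J - 1),
      lt_of_le_of_lt (min_le_right _ _) (Nat.sub_lt hJpos Nat.one_pos)⟩ with hjslotdef
  have hslot : ∀ i u v, u ∉ jk i → v ∉ jk i → col i u = col i v →
      slot i u = slot i v → u = v := by
    intro i u v hu hv hcc heq
    have hum : u ∈ classSet i (col i u) := by
      rw [hclassSet]
      simp only [Finset.mem_filter, Finset.mem_univ, true_and, and_true]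
      exact hu
    have hvm : v ∈ classSet i (col i u) := by
      rw [hclassSet]; simp only [Finset.mem_filter, Finset.mem_univ, true_and]
      exact ⟨hv, hcc.symm⟩
    have hru : rk (classSet i (col i u)) u < t :=
      lt_of_lt_of_le (hrk1 _ u hum) (le_of_lt (hclasslt i (col i u)))
    have hrv : rk (classSet i (col i u)) v < t :=
      lt_of_lt_of_le (hrk1 _ v hvm) (le_of_lt (hclasslt i (col i u)))
    rw [hslotdef] at heq
    simp only [Fin.mk.injEq] at heq
    rw [hcc] at heq
    have h1 : min (rk (classSet i (col i v)) u) (t - 1) = rk (classSet i (col i v)) u := by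
      rw [← hcc]
      exact min_eq_left (by omega)
    have h2 : min (rk (classSet i (col i v)) v) (t - 1) = rk (classSet i (col i v)) v := by
      rw [← hcc]
      exact min_eq_left (by omega)
    rw [h1, h2, ← hcc] at heq
    exact hrk2 _ u hum v hvm heq
  have hjslot : ∀ i u v, u ∈ jk i → v ∈ jk i → jslot i u = jslot i v → u = v := by
    intro i u v hu hv heq
    have hru : rk (jk i) u < J := lt_of_lt_of_le (hrk1 _ u hu) (le_of_lt (hjlt i))
    have hrv : rk (jk i) v < J := lt_of_lt_of_le (hrk1 _ v hv) (le_of_lt (hjlt i))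
    rw [hjslotdef] at heq
    simp only [Fin.mk.injEq] at heq
    rw [min_eq_left (by omega : rk (jk i) u ≤ J - 1),
      min_eq_left (by omega : rk (jk i) v ≤ J - 1)] at heq
    exact hrk2 _ u hu v hv heq
  -- build the universal graph and bound uNumN
  obtain ⟨U, hU⟩ := exists_universal n k s t J m Gr col jk σf slot jslot
    hσinj hcross hpropG hslot hjslot
  set N := s * t + m * J with hN
  have hNmem : N ∈ {N | ∃ U : SimpleGraph (Fin N), ∀ G ∈ F n, Nonempty (G ↪g U)} := by
    set e : ((Fin s × Fin t) ⊕ (Fin m × Fin J)) ≃ Fin N :=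
      (Equiv.sumCongr finProdFinEquiv finProdFinEquiv).trans finSumFinEquiv with he
    refine ⟨U.map e.toEmbedding, ?_⟩
    intro G hG
    obtain ⟨i, rfl⟩ := hGsurj G hG
    obtain ⟨emb⟩ := hU i
    exact ⟨(SimpleGraph.Embedding.map e.toEmbedding U).comp emb⟩
  have hUle : uNumN (F n) ≤ N := Nat.sInf_le hNmem
  -- numeric contradiction
  have hsq2 : sqn * sqn ≤ (P + 1) * n := by rw [hsqn]; exact Nat.sqrt_le _
  have hsqpos : 0 < sqn := by
    rw [hsqn]
    exact Nat.sqrt_pos.mpr (Nat.mul_pos (by omega) (by omega))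
  have e1 : n / L ≤ n / sqn := Nat.div_le_div_left (by omega) hsqpos
  have e2 : (n / sqn) * (P + 1) ≤ ((P + 1) * n) / sqn := by
    rw [Nat.le_div_iff_mul_le hsqpos]
    calc n / sqn * (P + 1) * sqn = n / sqn * sqn * (P + 1) := by ring
      _ ≤ n * (P + 1) := Nat.mul_le_mul_right _ (Nat.div_mul_le_self n sqn)
      _ = (P + 1) * n := Nat.mul_comm _ _
  have e3 : ((P + 1) * n) / sqn ≤ sqn + 2 := by
    have h5 : (P + 1) * n < sqn * (sqn + 2) + 1 := by
      calc (P + 1) * n < (sqn + 1) * (sqn + 1) := by rw [hsqn]; exact Nat.lt_succ_sqrt _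
        _ = sqn * (sqn + 2) + 1 := by ring
    have h4 : (P + 1) * n ≤ sqn * (sqn + 2) := Nat.lt_succ_iff.mp h5
    calc ((P + 1) * n) / sqn ≤ (sqn * (sqn + 2)) / sqn := Nat.div_le_div_right h4
      _ = sqn + 2 := Nat.mul_div_cancel_left _ hsqpos
  have hJle : J ≤ sqn + 3 := by
    have h6 : (n / L) * (P + 1) ≤ sqn + 2 :=
      le_trans (Nat.mul_le_mul_right _ e1) (le_trans e2 e3)
    exact Nat.add_le_add_right h6 1
  have htdef2 : t = n / k + ((P + 1) + sqn + P + 1) + 1 := by rw [htdef, hMdef, hLdef]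
  have hPδ : (P : ℝ) ≤ (δ / 2) * n := by
    refine le_trans ?_ hEo
    exact_mod_cast Nat.le_mul_of_pos_right P (show 0 < k by omega)
  have hlbN : c * n - err n ≤ (N : ℝ) := le_trans (hlb n) (by exact_mod_cast hUle)
  exact numeric_contra k s A n P m sqn t J N c ε δ DD (err n) hk htdef2 hJle hN hsq2
    hcon hε hεpos hDD hδ hδpos hE1 hE2 hE3 hPδ hEe hlbN
end

section
/- Let n be a positive integer with n² ≥ 811. Every family of at most n² graphs, each having exactly n vertices, has an induced-universal graph with fewer than 15·n²/7 vertices. -/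
theorem stmt15 (n : ℕ) (hn : 0 < n) (h811 : 811 ≤ n ^ 2)
    (F : Set (SimpleGraph (Fin n))) (hcard : F.ncard ≤ n ^ 2) :
    ∃ (N : ℕ) (U : SimpleGraph (Fin N)),
      (N : ℝ) < 15 * (n : ℝ) ^ 2 / 7 ∧ ∀ G ∈ F, Nonempty (G ↪g U) := by
  classical
  obtain ⟨p, hp, hnp, hp2n⟩ := Nat.exists_prime_lt_and_le_two_mul n hn.ne'
  haveI : Fact p.Prime := ⟨hp⟩
  haveI : Fintype F := Fintype.ofFinite F
  -- get an injection from F into lines (a, b)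
  have hcard2 : Fintype.card F ≤ Fintype.card (ZMod p × ZMod p) := by
    have h1 : Fintype.card F = F.ncard := by
      rw [← Nat.card_coe_set_eq, Nat.card_eq_fintype_card]
    have h2 : Fintype.card (ZMod p × ZMod p) = p * p := by
      simp [ZMod.card]
    have hn2 : n ^ 2 ≤ p * p := by nlinarith
    omega
  obtain ⟨ι⟩ := Function.Embedding.nonempty_of_card_le hcard2
  set a : F → ZMod p := fun G => (ι G).1 with ha
  set b : F → ZMod p := fun G => (ι G).2 with hb
  -- cast injectivity
  have hinj : ∀ u v : Fin n, ((u : ℕ) : ZMod p) = ((v : ℕ) : ZMod p) → u = v := by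
    intro u v huv
    have hu : (((u : ℕ) : ZMod p)).val = (u : ℕ) := ZMod.val_cast_of_lt (lt_trans u.isLt hnp)
    have hv : (((v : ℕ) : ZMod p)).val = (v : ℕ) := ZMod.val_cast_of_lt (lt_trans v.isLt hnp)
    exact Fin.ext (by rw [← hu, ← hv, huv])
  let U' : SimpleGraph (Fin n × ZMod p) :=
    { Adj := fun v w => ∃ G : F,
        v.2 = a G * ((v.1 : ℕ) : ZMod p) + b G ∧
        w.2 = a G * ((w.1 : ℕ) : ZMod p) + b G ∧
        (G : SimpleGraph (Fin n)).Adj v.1 w.1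
      symm := ⟨by rintro v w ⟨G, h1, h2, h3⟩; exact ⟨G, h2, h1, h3.symm⟩⟩
      loopless := ⟨by rintro v ⟨G, _, _, h3⟩; exact (G : SimpleGraph (Fin n)).loopless.irrefl _ h3⟩ }
  have hcardVP : Fintype.card (Fin n × ZMod p) = n * p := by simp [ZMod.card]
  let e : (Fin n × ZMod p) ≃ Fin (n * p) := Fintype.equivFinOfCardEq hcardVP
  refine ⟨n * p, U'.comap ⇑e.symm, ?_, ?_⟩
  · have h1 : (n * p : ℝ) ≤ 2 * (n : ℝ) ^ 2 := by
      have : (p : ℝ) ≤ 2 * n := by exact_mod_cast hp2n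
      have hn' : (0 : ℝ) < n := by exact_mod_cast hn
      push_cast
      nlinarith
    have hn' : (0 : ℝ) < n := by exact_mod_cast hn
    push_cast
    nlinarith
  · intro G hG
    refine ⟨⟨⟨fun x => e (x, a ⟨G, hG⟩ * ((x : ℕ) : ZMod p) + b ⟨G, hG⟩), ?_⟩, ?_⟩⟩
    · intro u v huv
      have := congrArg (fun z => (e.symm z).1) huv
      simpa using this
    · intro u v
      show U'.Adj (e.symm (e _)) (e.symm (e _)) ↔ _
      simp only [Equiv.symm_apply_apply]
      constructor
      · rintro ⟨H, h1, h2, h3⟩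
        -- the two lines H and ⟨G,hG⟩ agree at two distinct points u ≠ v
        have huv : u ≠ v := (H : SimpleGraph (Fin n)).ne_of_adj h3
        by_cases hHG : H = ⟨G, hG⟩
        · rwa [hHG] at h3
        -- show a H = a ⟨G,hG⟩
        have hune : ((u : ℕ) : ZMod p) ≠ ((v : ℕ) : ZMod p) := fun h => huv (hinj u v h)
        have e1 : a H * ((u : ℕ) : ZMod p) + b H
            = a ⟨G, hG⟩ * ((u : ℕ) : ZMod p) + b ⟨G, hG⟩ := h1.symm
        have e2 : a H * ((v : ℕ) : ZMod p) + b H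
            = a ⟨G, hG⟩ * ((v : ℕ) : ZMod p) + b ⟨G, hG⟩ := h2.symm
        have e3 : (a H - a ⟨G, hG⟩) * (((u : ℕ) : ZMod p) - ((v : ℕ) : ZMod p)) = 0 := by
          ring_nf
          linear_combination e1 - e2
        have e4 : a H = a ⟨G, hG⟩ := by
          rcases mul_eq_zero.mp e3 with h | h
          · exact sub_eq_zero.mp h
          · exact absurd (sub_eq_zero.mp h) hune
        have e5 : b H = b ⟨G, hG⟩ := by
          have := e1
          rw [e4] at this
          exact add_left_cancel this
        exact absurd (ι.injective (Prod.ext e4 e5)) hHG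
      · intro hAdj
        exact ⟨⟨G, hG⟩, rfl, rfl, hAdj⟩
end

section
/- Let s and k be integers such that s is prime and 2 ≤ k ≤ s. Then A(s·k, 2k−2, k) ≥ s² + k·A(s, 2k−2, k). -/
lemma design_bddAbove (s k : ℕ) :
    BddAbove {m | ∃ 𝒞 : Finset (Finset (Fin s)), 𝒞.card = m ∧ (∀ C ∈ 𝒞, C.card = k) ∧
      ∀ C ∈ 𝒞, ∀ D ∈ 𝒞, C ≠ D → (C ∩ D).card ≤ 1} := by
  refine ⟨Fintype.card (Finset (Fin s)), ?_⟩
  rintro m ⟨𝒞, rfl, -, -⟩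
  exact Finset.card_le_univ 𝒞

lemma le_designNumber {α : Type} [Fintype α] [DecidableEq α] {n k : ℕ} (e : α ≃ Fin n)
    (𝒞 : Finset (Finset α)) (h1 : ∀ C ∈ 𝒞, C.card = k)
    (h2 : ∀ C ∈ 𝒞, ∀ D ∈ 𝒞, C ≠ D → (C ∩ D).card ≤ 1) :
    𝒞.card ≤ designNumber n k := by
  apply le_csSup (design_bddAbove n k)
  refine ⟨𝒞.image (fun C => C.image e), ?_, ?_, ?_⟩
  · exact Finset.card_image_of_injective _ (Finset.image_injective e.injective)
  · rintro C' hC'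
    obtain ⟨C, hC, rfl⟩ := Finset.mem_image.1 hC'
    rw [Finset.card_image_of_injective _ e.injective]
    exact h1 C hC
  · rintro C' hC' D' hD' hne
    obtain ⟨C, hC, rfl⟩ := Finset.mem_image.1 hC'
    obtain ⟨D, hD, rfl⟩ := Finset.mem_image.1 hD'
    rw [← Finset.image_inter _ _ e.injective,
      Finset.card_image_of_injective _ e.injective]
    exact h2 C hC D hD (fun h => hne (by rw [h]))

lemma exists_design (s k : ℕ) :
    ∃ 𝒟 : Finset (Finset (Fin s)), 𝒟.card = designNumber s k ∧ (∀ C ∈ 𝒟, C.card = k) ∧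
      ∀ C ∈ 𝒟, ∀ D ∈ 𝒟, C ≠ D → (C ∩ D).card ≤ 1 := by
  have h := Nat.sSup_mem (s := {m | ∃ 𝒞 : Finset (Finset (Fin s)), 𝒞.card = m ∧
      (∀ C ∈ 𝒞, C.card = k) ∧ ∀ C ∈ 𝒞, ∀ D ∈ 𝒞, C ≠ D → (C ∩ D).card ≤ 1})
    ⟨0, ⟨∅, by simp⟩⟩ (design_bddAbove s k)
  exact h

section Construction

variable {s k : ℕ}

def lineSet (k : ℕ) (a b : ZMod s) : Finset (ZMod s × Fin k) :=
  Finset.univ.image (fun j : Fin k => (a + b * (j.val : ZMod s), j))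

def colSet (j : Fin k) (C : Finset (ZMod s)) : Finset (ZMod s × Fin k) :=
  C.image (fun x => (x, j))

lemma mem_lineSet {a b x : ZMod s} {j : Fin k} :
    (x, j) ∈ lineSet k a b ↔ x = a + b * (j.val : ZMod s) := by
  simp only [lineSet, Finset.mem_image, Finset.mem_univ, true_and, Prod.mk.injEq]
  constructor
  · rintro ⟨j', h1, rfl⟩; exact h1.symm
  · rintro rfl; exact ⟨j, rfl, rfl⟩

lemma mem_colSet {x : ZMod s} {j j' : Fin k} {C : Finset (ZMod s)} :
    (x, j') ∈ colSet j C ↔ x ∈ C ∧ j' = j := by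
  simp only [colSet, Finset.mem_image, Prod.mk.injEq]
  constructor
  · rintro ⟨y, hy, rfl, rfl⟩; exact ⟨hy, rfl⟩
  · rintro ⟨hx, rfl⟩; exact ⟨x, hx, rfl, rfl⟩

lemma castInj [NeZero s] (hks : k ≤ s) {j1 j2 : Fin k}
    (h : ((j1.val : ZMod s)) = (j2.val : ZMod s)) : j1 = j2 := by
  have := congrArg ZMod.val h
  rw [ZMod.val_natCast, ZMod.val_natCast, Nat.mod_eq_of_lt (lt_of_lt_of_le j1.isLt hks),
    Nat.mod_eq_of_lt (lt_of_lt_of_le j2.isLt hks)] at this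
  exact Fin.ext this

end Construction

theorem stmt16 (s k : ℕ) (hs : s.Prime) (hk2 : 2 ≤ k) (hks : k ≤ s) :
    s ^ 2 + k * designNumber s k ≤ designNumber (s * k) k := by
  haveI : Fact s.Prime := ⟨hs⟩
  obtain ⟨𝒟₀, hcard₀, hsize₀, hint₀⟩ := exists_design s k
  -- transport design to ZMod s
  have e2 : Fin s ≃ ZMod s := (Fintype.equivFinOfCardEq (ZMod.card s)).symm
  set 𝒟 : Finset (Finset (ZMod s)) := 𝒟₀.image (fun C => C.image e2) with h𝒟
  have hcard : 𝒟.card = designNumber s k := by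
    rw [h𝒟, Finset.card_image_of_injective _ (Finset.image_injective e2.injective), hcard₀]
  have hsize : ∀ C ∈ 𝒟, C.card = k := by
    rintro C' hC'
    obtain ⟨C, hC, rfl⟩ := Finset.mem_image.1 hC'
    rw [Finset.card_image_of_injective _ e2.injective]; exact hsize₀ C hC
  have hint : ∀ C ∈ 𝒟, ∀ D ∈ 𝒟, C ≠ D → (C ∩ D).card ≤ 1 := by
    rintro C' hC' D' hD' hne
    obtain ⟨C, hC, rfl⟩ := Finset.mem_image.1 hC'
    obtain ⟨D, hD, rfl⟩ := Finset.mem_image.1 hD'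
    rw [← Finset.image_inter _ _ e2.injective,
      Finset.card_image_of_injective _ e2.injective]
    exact hint₀ C hC D hD (fun h => hne (by rw [h]))
  -- the big family
  set ℒ : Finset (Finset (ZMod s × Fin k)) :=
    (Finset.univ : Finset (ZMod s × ZMod s)).image (fun p => lineSet k p.1 p.2) with hℒ
  set Cols : Finset (Finset (ZMod s × Fin k)) :=
    ((Finset.univ : Finset (Fin k)) ×ˢ 𝒟).image (fun p => colSet p.1 p.2) with hCols
  have hs2 : 2 ≤ s := hs.two_le
  have hk0 : 0 < k := by omega
  have hk1 : 1 < k := hk2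
  -- two distinguished indices in Fin k
  set j0 : Fin k := ⟨0, hk0⟩ with hj0
  set j1 : Fin k := ⟨1, hk1⟩ with hj1
  -- lines are never column sets (a line has two different second coordinates)
  have line_ne_col : ∀ (a b : ZMod s) (j : Fin k) (C : Finset (ZMod s)),
      lineSet k a b ≠ colSet j C := by
    intro a b j C h
    have h0 : (a + b * ((j0 : Fin k).val : ZMod s), j0) ∈ lineSet k a b := mem_lineSet.2 rfl
    have h1 : (a + b * ((j1 : Fin k).val : ZMod s), j1) ∈ lineSet k a b := mem_lineSet.2 rfl
    rw [h] at h0 h1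
    have hj : j0 = j1 := (mem_colSet.1 h0).2.trans (mem_colSet.1 h1).2.symm
    simp [hj0, hj1, Fin.ext_iff] at hj
  -- injectivity of the line family
  have line_inj : ∀ a b a' b' : ZMod s, lineSet k a b = lineSet k a' b' →
      a = a' ∧ b = b' := by
    intro a b a' b' h
    have h0 : (a + b * ((j0 : Fin k).val : ZMod s), j0) ∈ lineSet k a' b' := by
      rw [← h]; exact mem_lineSet.2 rfl
    have h1 : (a + b * ((j1 : Fin k).val : ZMod s), j1) ∈ lineSet k a' b' := by
      rw [← h]; exact mem_lineSet.2 rfl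
    rw [mem_lineSet] at h0 h1
    have hj0v : ((j0 : Fin k).val : ZMod s) = 0 := by simp [hj0]
    have hj1v : ((j1 : Fin k).val : ZMod s) = 1 := by simp [hj1]
    rw [hj0v] at h0
    rw [hj1v] at h1
    simp only [mul_zero, add_zero, mul_one] at h0 h1
    constructor
    · exact h0
    · have := h1
      rw [h0] at this
      exact add_left_cancel this
  -- intersection of two distinct lines
  have line_line : ∀ a b a' b' : ZMod s, lineSet k a b ≠ lineSet k a' b' →
      (lineSet k a b ∩ lineSet k a' b').card ≤ 1 := by
    intro a b a' b' hne
    rw [Finset.card_le_one]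
    rintro ⟨x1, i1⟩ hx1 ⟨x2, i2⟩ hx2
    rw [Finset.mem_inter, mem_lineSet, mem_lineSet] at hx1 hx2
    by_contra hdiff
    have hi : i1 ≠ i2 := by
      intro h; subst h
      exact hdiff (by rw [Prod.mk.injEq]; exact ⟨hx1.1.trans hx2.1.symm, rfl⟩)
    have hc : ((i1.val : ZMod s)) ≠ (i2.val : ZMod s) := fun h => hi (castInj hks h)
    -- a + b c1 = a' + b' c1, a + b c2 = a' + b' c2
    have e1 : a + b * (i1.val : ZMod s) = a' + b' * (i1.val : ZMod s) :=
      hx1.1.symm.trans hx1.2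
    have e2' : a + b * (i2.val : ZMod s) = a' + b' * (i2.val : ZMod s) :=
      hx2.1.symm.trans hx2.2
    have hbb : b = b' := by
      have h3 : (b - b') * ((i1.val : ZMod s) - (i2.val : ZMod s)) = 0 := by ring_nf; linear_combination e1 - e2'
      rcases mul_eq_zero.1 h3 with h4 | h4
      · exact sub_eq_zero.1 h4
      · exact absurd (sub_eq_zero.1 h4) hc
    have haa : a = a' := by
      rw [hbb] at e1
      exact add_right_cancel e1
    exact hne (by rw [haa, hbb])
  -- intersection of a line with a column set
  have line_col : ∀ (a b : ZMod s) (j : Fin k) (C : Finset (ZMod s)),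
      (lineSet k a b ∩ colSet j C).card ≤ 1 := by
    intro a b j C
    rw [Finset.card_le_one]
    rintro ⟨x1, i1⟩ hx1 ⟨x2, i2⟩ hx2
    rw [Finset.mem_inter, mem_lineSet, mem_colSet] at hx1 hx2
    obtain ⟨hxa, -, he1⟩ := hx1
    obtain ⟨hxb, -, he2⟩ := hx2
    subst he1; subst he2
    rw [Prod.mk.injEq]
    exact ⟨hxa.trans hxb.symm, rfl⟩
  -- intersection of two distinct column sets
  have col_col : ∀ (j j' : Fin k) (C C' : Finset (ZMod s)), C ∈ 𝒟 → C' ∈ 𝒟 →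
      colSet j C ≠ colSet j' C' → (colSet j C ∩ colSet j' C').card ≤ 1 := by
    intro j j' C C' hC hC' hne
    by_cases hjj : j = j'
    · subst hjj
      have hCC : C ≠ C' := fun h => hne (by rw [h])
      have : colSet j C ∩ colSet j C' = colSet j (C ∩ C') := by
        ext ⟨x, i⟩
        simp only [Finset.mem_inter, mem_colSet]
        tauto
      rw [this]
      calc (colSet j (C ∩ C')).card ≤ (C ∩ C').card := Finset.card_image_le
        _ ≤ 1 := hint C hC C' hC' hCC
    · have : colSet j C ∩ colSet j' C' = ∅ := by
        ext ⟨x, i⟩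
        simp only [Finset.mem_inter, mem_colSet, Finset.notMem_empty, iff_false]
        rintro ⟨⟨-, h1⟩, -, h2⟩
        exact hjj (h1.symm.trans h2)
      simp [this]
  -- column sets are injective on (univ ×ˢ 𝒟)
  have col_inj : ∀ (j j' : Fin k) (C C' : Finset (ZMod s)), C ∈ 𝒟 → C' ∈ 𝒟 →
      colSet j C = colSet j' C' → j = j' ∧ C = C' := by
    intro j j' C C' hC hC' h
    have hCne : C.Nonempty := by
      rw [← Finset.card_pos, hsize C hC]; omega
    obtain ⟨x, hx⟩ := hCne
    have hmem : (x, j) ∈ colSet j' C' := by rw [← h]; exact mem_colSet.2 ⟨hx, rfl⟩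
    have hjj : j = j' := (mem_colSet.1 hmem).2
    subst hjj
    refine ⟨rfl, ?_⟩
    ext y
    constructor
    · intro hy
      have : (y, j) ∈ colSet j C' := by rw [← h]; exact mem_colSet.2 ⟨hy, rfl⟩
      exact (mem_colSet.1 this).1
    · intro hy
      have : (y, j) ∈ colSet j C := by rw [h]; exact mem_colSet.2 ⟨hy, rfl⟩
      exact (mem_colSet.1 this).1
  -- cardinalities
  have hℒcard : ℒ.card = s ^ 2 := by
    rw [hℒ, Finset.card_image_of_injOn, Finset.card_univ]
    · simp [Fintype.card_prod, ZMod.card, sq]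
    · rintro ⟨a, b⟩ - ⟨a', b'⟩ - h
      obtain ⟨h1, h2⟩ := line_inj a b a' b' h
      simp [h1, h2]
  have hColscard : Cols.card = k * designNumber s k := by
    rw [hCols, Finset.card_image_of_injOn, Finset.card_product, Finset.card_univ,
      Fintype.card_fin, hcard]
    rintro ⟨j, C⟩ hp ⟨j', C'⟩ hp' h
    rw [Finset.mem_coe, Finset.mem_product] at hp hp'
    obtain ⟨h1, h2⟩ := col_inj j j' C C' hp.2 hp'.2 h
    simp [h1, h2]
  have hdisj : Disjoint ℒ Cols := by
    rw [Finset.disjoint_left]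
    rintro X hX hX'
    rw [hℒ, Finset.mem_image] at hX
    rw [hCols, Finset.mem_image] at hX'
    obtain ⟨⟨a, b⟩, -, rfl⟩ := hX
    obtain ⟨⟨j, C⟩, -, hXe⟩ := hX'
    exact line_ne_col a b j C hXe.symm
  -- final application
  have hfam1 : ∀ X ∈ ℒ ∪ Cols, X.card = k := by
    rintro X hX
    rcases Finset.mem_union.1 hX with hX | hX
    · rw [hℒ, Finset.mem_image] at hX
      obtain ⟨⟨a, b⟩, -, rfl⟩ := hX
      rw [lineSet, Finset.card_image_of_injective, Finset.card_univ, Fintype.card_fin]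
      intro i1 i2 h
      exact congrArg Prod.snd h
    · rw [hCols, Finset.mem_image] at hX
      obtain ⟨⟨j, C⟩, hp, rfl⟩ := hX
      rw [Finset.mem_product] at hp
      rw [colSet, Finset.card_image_of_injective]
      · exact hsize C hp.2
      · intro x y h
        exact congrArg Prod.fst h
  have hfam2 : ∀ X ∈ ℒ ∪ Cols, ∀ Y ∈ ℒ ∪ Cols, X ≠ Y → (X ∩ Y).card ≤ 1 := by
    rintro X hX Y hY hne
    rcases Finset.mem_union.1 hX with hX | hX <;> rcases Finset.mem_union.1 hY with hY | hY
    · rw [hℒ, Finset.mem_image] at hX hY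
      obtain ⟨⟨a, b⟩, -, rfl⟩ := hX
      obtain ⟨⟨a', b'⟩, -, rfl⟩ := hY
      exact line_line a b a' b' hne
    · rw [hℒ, Finset.mem_image] at hX
      rw [hCols, Finset.mem_image] at hY
      obtain ⟨⟨a, b⟩, -, rfl⟩ := hX
      obtain ⟨⟨j, C⟩, -, rfl⟩ := hY
      exact line_col a b j C
    · rw [hCols, Finset.mem_image] at hX
      rw [hℒ, Finset.mem_image] at hY
      obtain ⟨⟨j, C⟩, -, rfl⟩ := hX
      obtain ⟨⟨a, b⟩, -, rfl⟩ := hY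
      rw [Finset.inter_comm]
      exact line_col a b j C
    · rw [hCols, Finset.mem_image] at hX hY
      obtain ⟨⟨j, C⟩, hp, rfl⟩ := hX
      obtain ⟨⟨j', C'⟩, hp', rfl⟩ := hY
      rw [Finset.mem_product] at hp hp'
      exact col_col j j' C C' hp.2 hp'.2 hne
  have key := le_designNumber (α := ZMod s × Fin k)
    ((Equiv.prodCongr (Fintype.equivFinOfCardEq (ZMod.card s)) (Equiv.refl (Fin k))).trans
      finProdFinEquiv)
    (ℒ ∪ Cols) hfam1 hfam2
  rwa [Finset.card_union_of_disjoint hdisj, hℒcard, hColscard] at key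
end
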